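/- arXiv:2311.02745 — 16 statements merged into one kernel-verified Lean document; each statement's English description precedes it below -/
import Mathlib

section
/- For the logit system with β = 0 and θ ∈ (0,1), the tragedy fixed point (1/2, 0) is globally attracting on the interior: for every continuously differentiable curve z = (x,n) : [0,∞) → [0,1]² satisfying ẋ(t) = 1/2 − x(t) and ṅ(t) = ε·n(t)·(1−n(t))·((1+θ)x(t) − 1) with x(0) ∈ (0,1) and n(0) ∈ (0,1), one has x(t) → 1/2 and n(t) → 0 as t → ∞. -/
set_option autoImplicit false

open Real Set Filter

/-- For the logit system with β = 0 and θ ∈ (0,1), the tragedy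
fixed point (1/2, 0) is globally attracting on the interior: every C¹ solution
curve in [0,1]² starting in the open square converges to (1/2, 0). -/
theorem logit_beta_zero_globally_attracting
    (θ ε : ℝ) (hθ : θ ∈ Ioo (0:ℝ) 1) (hε : 0 < ε)
    (x n : ℝ → ℝ)
    (hx_smooth : ContDiffOn ℝ 1 x (Ici (0:ℝ)))
    (hn_smooth : ContDiffOn ℝ 1 n (Ici (0:ℝ)))
    (hrange : ∀ t ∈ Ici (0:ℝ), x t ∈ Icc (0:ℝ) 1 ∧ n t ∈ Icc (0:ℝ) 1)
    (hdx : ∀ t ∈ Ici (0:ℝ), HasDerivAt x (1/2 - x t) t)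
    (hdn : ∀ t ∈ Ici (0:ℝ),
      HasDerivAt n (ε * n t * (1 - n t) * ((1 + θ) * x t - 1)) t)
    (hx0 : x 0 ∈ Ioo (0:ℝ) 1) (hn0 : n 0 ∈ Ioo (0:ℝ) 1) :
    Tendsto x atTop (nhds (1/2)) ∧ Tendsto n atTop (nhds 0) := by
  obtain ⟨hθ0, hθ1⟩ := hθ
  have hxc : ContinuousOn x (Ici (0:ℝ)) := hx_smooth.continuousOn
  have hnc : ContinuousOn n (Ici (0:ℝ)) := hn_smooth.continuousOn
  -- explicit solution for x
  have hxf : ∀ t ∈ Ici (0:ℝ), x t = 1/2 + (x 0 - 1/2) * Real.exp (-t) := by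
    intro t ht
    have key : ∀ s ∈ Icc (0:ℝ) t,
        (x s - 1/2) * Real.exp s = (x 0 - 1/2) * Real.exp 0 := by
      apply constant_of_has_deriv_right_zero
      · exact ((hxc.mono Icc_subset_Ici_self).sub continuousOn_const).mul
          Real.continuous_exp.continuousOn
      · intro s hs
        have h1 : HasDerivAt (fun u => (x u - 1/2) * Real.exp u)
            ((1/2 - x s) * Real.exp s + (x s - 1/2) * Real.exp s) s :=
          ((hdx s hs.1).sub_const _).mul (Real.hasDerivAt_exp s)
        have h0 : (1/2 - x s) * Real.exp s + (x s - 1/2) * Real.exp s = 0 := by ring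
        exact (h0 ▸ h1).hasDerivWithinAt
    have hkey := key t ⟨ht, le_rfl⟩
    rw [Real.exp_zero, mul_one] at hkey
    have hexp : Real.exp t ≠ 0 := (Real.exp_pos t).ne'
    have h2 : (x 0 - 1/2) * Real.exp (-t) = x t - 1/2 := by
      rw [← hkey, Real.exp_neg, mul_assoc, mul_inv_cancel₀ hexp, mul_one]
    linarith
  have hx_t : Tendsto x atTop (nhds (1/2)) := by
    have hexp : Tendsto (fun t : ℝ => Real.exp (-t)) atTop (nhds 0) :=
      Real.tendsto_exp_atBot.comp tendsto_neg_atTop_atBot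
    have h1 : Tendsto (fun t => 1/2 + (x 0 - 1/2) * Real.exp (-t)) atTop
        (nhds (1/2 + (x 0 - 1/2) * 0)) :=
      tendsto_const_nhds.add (hexp.const_mul _)
    rw [mul_zero, add_zero] at h1
    apply h1.congr'
    filter_upwards [eventually_ge_atTop (0:ℝ)] with t ht
    exact (hxf t ht).symm
  -- eventual drift bound
  set δ : ℝ := (1 - θ)/4 with hδ
  have hδpos : 0 < δ := by rw [hδ]; linarith
  have hdrift : ∀ᶠ t in atTop, (1 + θ) * x t - 1 ≤ -δ := by
    have h1 : Tendsto (fun t => (1 + θ) * x t - 1) atTop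
        (nhds ((1 + θ) * (1/2) - 1)) := (hx_t.const_mul (1 + θ)).sub_const 1
    have h2 : (1 + θ) * (1/2) - 1 < -δ := by rw [hδ]; linarith
    filter_upwards [h1.eventually_lt_const h2] with t ht using ht.le
  obtain ⟨T, hT⟩ := eventually_atTop.1 (hdrift.and (eventually_ge_atTop (0:ℝ)))
  have hT0 : (0:ℝ) ≤ T := (hT T le_rfl).2
  have hTd : ∀ t, T ≤ t → (1 + θ) * x t - 1 ≤ -δ := fun t h => (hT t h).1
  -- invariance: n stays below 1
  set b : ℝ → ℝ := fun s => -(ε * n s * ((1 + θ) * x s - 1)) with hbdef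
  have hbc : ContinuousOn b (Ici (0:ℝ)) :=
    ((continuousOn_const.mul hnc).mul
      ((continuousOn_const.mul hxc).sub continuousOn_const)).neg
  have hint : ∀ s ∈ Ici (0:ℝ), IntervalIntegrable b MeasureTheory.volume 0 s := by
    intro s hs
    apply ContinuousOn.intervalIntegrable
    rw [uIcc_of_le hs]
    exact hbc.mono Icc_subset_Ici_self
  set B : ℝ → ℝ := fun u => ∫ r in (0:ℝ)..u, b r with hBdef
  have hBderiv : ∀ s ∈ Ici (0:ℝ), HasDerivWithinAt B (b s) (Ici s) s := by
    intro s hs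
    apply intervalIntegral.integral_hasDerivWithinAt_right (hint s hs) (t := Ioi s)
    · refine ⟨Ici 0, ?_, hbc.aestronglyMeasurable measurableSet_Ici⟩
      exact mem_of_superset self_mem_nhdsWithin fun r hr => mem_Ici.2 (le_trans (mem_Ici.1 hs) (le_of_lt (mem_Ioi.1 hr)))
    · exact (hbc s hs).mono fun r hr => mem_Ici.2 (le_trans (mem_Ici.1 hs) (le_of_lt (mem_Ioi.1 hr)))
  have hinv : ∀ t ∈ Ici (0:ℝ), 1 - n t = (1 - n 0) * Real.exp (B t) := by
    intro t ht
    have hBcont : ContinuousOn B (Icc 0 t) := by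
      have he : uIcc (0:ℝ) t = Icc 0 t := uIcc_of_le ht
      rw [← he]
      exact intervalIntegral.continuousOn_primitive_interval' (hint t ht) left_mem_uIcc
    have key : ∀ s ∈ Icc (0:ℝ) t,
        (1 - n s) * Real.exp (-(B s)) = (1 - n 0) * Real.exp (-(B 0)) := by
      apply constant_of_has_deriv_right_zero
      · exact ((continuousOn_const.sub (hnc.mono Icc_subset_Ici_self)).mul
          (Real.continuous_exp.comp_continuousOn hBcont.neg))
      · intro s hs
        have hs0 : s ∈ Ici (0:ℝ) := hs.1
        have hn' : HasDerivWithinAt (fun u => 1 - n u)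
            (-(ε * n s * (1 - n s) * ((1 + θ) * x s - 1))) (Ici s) s :=
          ((hdn s hs0).hasDerivWithinAt).const_sub 1
        have hB' : HasDerivWithinAt (fun u => -(B u)) (-(b s)) (Ici s) s :=
          (hBderiv s hs0).neg
        have hcomb := hn'.mul hB'.exp
        have h0 : (-(ε * n s * (1 - n s) * ((1 + θ) * x s - 1))) * Real.exp (-(B s))
            + (1 - n s) * (Real.exp (-(B s)) * (-(b s))) = 0 := by
          rw [hbdef]; ring
        exact h0 ▸ hcomb
    have hkey := key t ⟨ht, le_rfl⟩
    have hB0 : B 0 = 0 := intervalIntegral.integral_same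
    rw [hB0, neg_zero, Real.exp_zero, mul_one] at hkey
    have hexp : Real.exp (B t) ≠ 0 := (Real.exp_pos _).ne'
    rw [← hkey, Real.exp_neg, mul_assoc, inv_mul_cancel₀ hexp, mul_one]
  have h1n : ∀ t ∈ Ici (0:ℝ), 0 < 1 - n t := by
    intro t ht
    rw [hinv t ht]
    exact mul_pos (by linarith [hn0.2]) (Real.exp_pos _)
  -- n is antitone past T
  have hmono : AntitoneOn n (Ici T) := by
    apply antitoneOn_of_deriv_nonpos (convex_Ici T) (hnc.mono (Ici_subset_Ici.mpr hT0))
    · intro s hs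
      rw [interior_Ici] at hs
      exact ((hdn s (hT0.trans hs.le)).differentiableAt).differentiableWithinAt
    · intro s hs
      rw [interior_Ici] at hs
      have hs0 : s ∈ Ici (0:ℝ) := hT0.trans hs.le
      rw [(hdn s hs0).deriv]
      have h1 := (hrange s hs0).2
      have h2 := hTd s hs.le
      have h3 : 0 ≤ ε * n s * (1 - n s) :=
        mul_nonneg (mul_nonneg hε.le h1.1) (by linarith [h1.2])
      exact mul_nonpos_of_nonneg_of_nonpos h3 (by linarith)
  -- exponential decay of n
  have hnT1 : 0 < 1 - n T := h1n T hT0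
  set k : ℝ := ε * δ * (1 - n T) with hk
  have hkpos : 0 < k := mul_pos (mul_pos hε hδpos) hnT1
  have hφmono : AntitoneOn (fun t => n t * Real.exp (k * t)) (Ici T) := by
    have hexpc : Continuous fun t : ℝ => Real.exp (k * t) :=
      Real.continuous_exp.comp (continuous_const.mul continuous_id)
    have hder : ∀ s ∈ Ioi T, HasDerivAt (fun t => n t * Real.exp (k * t))
        ((ε * n s * (1 - n s) * ((1 + θ) * x s - 1)) * Real.exp (k * s)
          + n s * (Real.exp (k * s) * k)) s := by
      intro s hs
      have hs0 : s ∈ Ici (0:ℝ) := hT0.trans hs.le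
      have hlin : HasDerivAt (fun t : ℝ => k * t) k s := by
        simpa using (hasDerivAt_id s).const_mul k
      exact (hdn s hs0).mul hlin.exp
    apply antitoneOn_of_deriv_nonpos (convex_Ici T)
      ((hnc.mono (Ici_subset_Ici.mpr hT0)).mul hexpc.continuousOn)
    · intro s hs
      rw [interior_Ici] at hs
      exact (hder s hs).differentiableAt.differentiableWithinAt
    · intro s hs
      rw [interior_Ici] at hs
      rw [show (n * fun t => Real.exp (k * t)) = (fun t => n t * Real.exp (k * t)) from rfl,
        (hder s hs).deriv]
      have hs0 : s ∈ Ici (0:ℝ) := hT0.trans hs.le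
      have h1 := (hrange s hs0).2
      have h2 := hTd s hs.le
      have hns1 : n s ≤ n T := hmono self_mem_Ici (mem_Ici.2 (le_of_lt (mem_Ioi.1 hs))) hs.le
      have he := (Real.exp_pos (k * s)).le
      have h3 : 0 ≤ ε * n s * (1 - n s) :=
        mul_nonneg (mul_nonneg hε.le h1.1) (by linarith [h1.2])
      have A1 : ε * n s * (1 - n s) * ((1 + θ) * x s - 1)
          ≤ ε * n s * (1 - n s) * (-δ) := mul_le_mul_of_nonneg_left h2 h3
      have A2 : ε * n s * (1 - n s) * (-δ) + n s * k ≤ 0 := by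
        rw [hk]
        nlinarith [mul_nonneg (mul_nonneg (mul_nonneg hε.le hδpos.le) h1.1)
          (sub_nonneg.2 hns1)]
      have hsum : ε * n s * (1 - n s) * ((1 + θ) * x s - 1) + n s * k ≤ 0 := by linarith
      calc (ε * n s * (1 - n s) * ((1 + θ) * x s - 1)) * Real.exp (k * s)
            + n s * (Real.exp (k * s) * k)
          = (ε * n s * (1 - n s) * ((1 + θ) * x s - 1) + n s * k) * Real.exp (k * s) := by
            ring
        _ ≤ 0 := mul_nonpos_of_nonpos_of_nonneg hsum he
  have hbound : ∀ t, T ≤ t → n t ≤ (n T * Real.exp (k * T)) * Real.exp (-(k * t)) := by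
    intro t ht
    have hmt : n t * Real.exp (k * t) ≤ n T * Real.exp (k * T) :=
      hφmono self_mem_Ici ht ht
    have he : (0:ℝ) < Real.exp (k * t) := Real.exp_pos _
    rw [Real.exp_neg]
    calc n t = (n t * Real.exp (k * t)) * (Real.exp (k * t))⁻¹ := by
          field_simp
      _ ≤ (n T * Real.exp (k * T)) * (Real.exp (k * t))⁻¹ :=
          mul_le_mul_of_nonneg_right hmt (inv_nonneg.2 he.le)
  have hn_t : Tendsto n atTop (nhds 0) := by
    have h1 : Tendsto (fun t : ℝ => k * t) atTop atTop :=
      Tendsto.const_mul_atTop hkpos tendsto_id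
    have h2 : Tendsto (fun t : ℝ => Real.exp (-(k * t))) atTop (nhds 0) :=
      Real.tendsto_exp_atBot.comp (tendsto_neg_atTop_atBot.comp h1)
    have hupper : Tendsto (fun t => (n T * Real.exp (k * T)) * Real.exp (-(k * t)))
        atTop (nhds 0) := by
      simpa using h2.const_mul (n T * Real.exp (k * T))
    apply tendsto_of_tendsto_of_tendsto_of_le_of_le' tendsto_const_nhds hupper
    · filter_upwards [eventually_ge_atTop (0:ℝ)] with t ht
      exact (hrange t ht).2.1
    · filter_upwards [eventually_ge_atTop T] with t ht
      exact hbound t ht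
  exact ⟨hx_t, hn_t⟩
end

section
/- Suppose β > β_int := (1+θ)·log(1/θ) / (δ_RT0 + θ·δ_SP0). Then n_int := (δ_RT0 + θ·δ_SP0 − β^{-1}(1+θ)·log(1/θ)) / D lies in (0,1), and the point (x_int, n_int) with x_int := 1/(1+θ) is a fixed point of the logit system lying in the open square (0,1)². -/
set_option autoImplicit false

open Real Set

/-- If β > β_int, then n_int ∈ (0,1) and (x_int, n_int) with
x_int = 1/(1+θ) is a fixed point of the logit system lying in (0,1)². -/
theorem logit_interior_fixed_point_exists
    (δTR1 δPS1 δRT0 δSP0 θ ε : ℝ)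
    (hTR1 : 0 < δTR1) (hPS1 : 0 < δPS1) (hSP0 : δSP0 < 0) (hRT0 : -δSP0 < δRT0)
    (hθ : θ ∈ Ioo (0:ℝ) 1) (hε : 0 < ε)
    (a b c d D : ℝ)
    (ha : a = δSP0 - δRT0 + δPS1 - δTR1) (hb : b = δRT0 - δSP0)
    (hc : c = -(δPS1 + δSP0)) (hd : d = δSP0)
    (hD : D = δRT0 + θ * δSP0 + δTR1 + θ * δPS1)
    (g : ℝ → ℝ → ℝ) (hg : ∀ x n, g x n = a * x * n + b * x + c * n + d)
    (β βint : ℝ)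
    (F1 F2 : ℝ → ℝ → ℝ)
    (hF1 : ∀ x n, F1 x n = exp (β * g x n) / (1 + exp (β * g x n)) - x)
    (hF2 : ∀ x n, F2 x n = ε * n * (1 - n) * ((1 + θ) * x - 1))
    (hβint : βint = (1 + θ) * Real.log (1/θ) / (δRT0 + θ * δSP0))
    (hβ : βint < β)
    (xint nint : ℝ)
    (hxint : xint = 1 / (1 + θ))
    (hnint : nint = (δRT0 + θ * δSP0 - β⁻¹ * (1 + θ) * Real.log (1/θ)) / D) :
    nint ∈ Ioo (0:ℝ) 1 ∧ (xint, nint) ∈ Ioo (0:ℝ) 1 ×ˢ Ioo (0:ℝ) 1 ∧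
      F1 xint nint = 0 ∧ F2 xint nint = 0 := by
  obtain ⟨hθ0, hθ1⟩ := hθ
  have hL : 0 < Real.log (1/θ) := Real.log_pos (by rw [lt_div_iff₀ hθ0]; linarith)
  have hS : 0 < δRT0 + θ * δSP0 := by nlinarith
  have hβintpos : 0 < βint := by rw [hβint]; positivity
  have hβpos : 0 < β := hβintpos.trans hβ
  have hDpos : 0 < D := by rw [hD]; nlinarith
  have h1θ : (0:ℝ) < 1 + θ := by linarith
  have hkey : (1 + θ) * Real.log (1/θ) < β * (δRT0 + θ * δSP0) := by
    have := mul_lt_mul_of_pos_right hβ hS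
    rw [hβint, div_mul_cancel₀ _ hS.ne'] at this
    exact this
  have hnum : β⁻¹ * (1 + θ) * Real.log (1/θ) < δRT0 + θ * δSP0 := by
    have h2 : β⁻¹ * ((1 + θ) * Real.log (1/θ)) < β⁻¹ * (β * (δRT0 + θ * δSP0)) :=
      mul_lt_mul_of_pos_left hkey (inv_pos.mpr hβpos)
    rw [inv_mul_cancel_left₀ hβpos.ne'] at h2
    linarith [h2]
  have hnumpos : 0 < δRT0 + θ * δSP0 - β⁻¹ * (1 + θ) * Real.log (1/θ) := by linarith
  have hinvL : 0 < β⁻¹ * (1 + θ) * Real.log (1/θ) := by positivity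
  have hn0 : 0 < nint := by rw [hnint]; exact div_pos hnumpos hDpos
  have hn1 : nint < 1 := by
    rw [hnint, div_lt_one hDpos, hD]; nlinarith [mul_pos hθ0 hPS1]
  have hx0 : 0 < xint := by rw [hxint]; positivity
  have hx1 : xint < 1 := by
    rw [hxint, div_lt_one h1θ]; linarith
  have hgval : g xint nint = β⁻¹ * Real.log (1/θ) := by
    rw [hg, hxint, hnint]
    have e1 : a + (1 + θ) * c + D = 0 := by rw [ha, hc, hD]; ring
    have e2 : b + (1 + θ) * d - (δRT0 + θ * δSP0) = 0 := by rw [hb, hd]; ring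
    have hu : (1 + θ) * (1 + θ)⁻¹ = 1 := mul_inv_cancel₀ h1θ.ne'
    have hv : D * D⁻¹ = 1 := mul_inv_cancel₀ hDpos.ne'
    linear_combination ((1 + θ)⁻¹ * (δRT0 + θ * δSP0 - β⁻¹ * (1 + θ) * Real.log (1/θ)) * D⁻¹) * e1
      + (1 + θ)⁻¹ * e2
      + (β⁻¹ * Real.log (1/θ) - c * (δRT0 + θ * δSP0 - β⁻¹ * (1 + θ) * Real.log (1/θ)) * D⁻¹ - d) * hu
      - (1 + θ)⁻¹ * (δRT0 + θ * δSP0 - β⁻¹ * (1 + θ) * Real.log (1/θ)) * hv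
  have hβg : β * g xint nint = Real.log (1/θ) := by
    rw [hgval, ← mul_assoc, mul_inv_cancel₀ hβpos.ne', one_mul]
  have hexp : Real.exp (β * g xint nint) = 1/θ := by
    rw [hβg, Real.exp_log (by positivity)]
  refine ⟨⟨hn0, hn1⟩, ⟨⟨hx0, hx1⟩, ⟨hn0, hn1⟩⟩, ?_, ?_⟩
  · rw [hF1, hexp, hxint]
    rw [div_sub_div _ _ (by positivity) h1θ.ne']
    field_simp
    ring
  · rw [hF2, hxint]
    have : (1 + θ) * (1 / (1 + θ)) - 1 = 0 := by field_simp; ring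
    rw [this, mul_zero]
end

section
/- Let β > 0 and suppose (x, n) ∈ (0,1)² is a fixed point of the logit system. Then necessarily β > β_int := (1+θ)·log(1/θ) / (δ_RT0 + θ·δ_SP0), x = 1/(1+θ), and n = (δ_RT0 + θ·δ_SP0 − β^{-1}(1+θ)·log(1/θ)) / D. In particular, for 0 < β ≤ β_int the logit system has no fixed points in the open square (0,1)². -/
set_option autoImplicit false

open Real Set

/-- Let β > 0 and suppose (x,n) ∈ (0,1)² is a fixed point of the
logit system. Then necessarily β > β_int, x = 1/(1+θ), and
n = (δ_RT0 + θδ_SP0 − β⁻¹(1+θ)log(1/θ))/D. In particular, for 0 < β ≤ β_int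
there are no interior fixed points. -/
theorem logit_interior_fixed_point_necessary
    (δTR1 δPS1 δRT0 δSP0 θ ε : ℝ)
    (hTR1 : 0 < δTR1) (hPS1 : 0 < δPS1) (hSP0 : δSP0 < 0) (hRT0 : -δSP0 < δRT0)
    (hθ : θ ∈ Ioo (0:ℝ) 1) (hε : 0 < ε)
    (a b c d D : ℝ)
    (ha : a = δSP0 - δRT0 + δPS1 - δTR1) (hb : b = δRT0 - δSP0)
    (hc : c = -(δPS1 + δSP0)) (hd : d = δSP0)
    (hD : D = δRT0 + θ * δSP0 + δTR1 + θ * δPS1)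
    (g : ℝ → ℝ → ℝ) (hg : ∀ x n, g x n = a * x * n + b * x + c * n + d)
    (β βint : ℝ) (hβpos : 0 < β)
    (F1 F2 : ℝ → ℝ → ℝ)
    (hF1 : ∀ x n, F1 x n = exp (β * g x n) / (1 + exp (β * g x n)) - x)
    (hF2 : ∀ x n, F2 x n = ε * n * (1 - n) * ((1 + θ) * x - 1))
    (hβint : βint = (1 + θ) * Real.log (1/θ) / (δRT0 + θ * δSP0))
    (x n : ℝ) (hx : x ∈ Ioo (0:ℝ) 1) (hn : n ∈ Ioo (0:ℝ) 1)
    (hfix1 : F1 x n = 0) (hfix2 : F2 x n = 0) :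
    βint < β ∧ x = 1 / (1 + θ) ∧
      n = (δRT0 + θ * δSP0 - β⁻¹ * (1 + θ) * Real.log (1/θ)) / D := by
  obtain ⟨hθ0, hθ1⟩ := hθ
  obtain ⟨hn0, hn1⟩ := hn
  have h1θ : (0:ℝ) < 1 + θ := by linarith
  -- x = 1/(1+θ)
  have hxeq : x = 1 / (1 + θ) := by
    rw [hF2] at hfix2
    have h1n : 0 < 1 - n := by linarith
    have hne : ε * n * (1 - n) ≠ 0 := by positivity
    have h0 : (1 + θ) * x - 1 = 0 := by
      rcases mul_eq_zero.mp hfix2 with h | h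
      · exact absurd h hne
      · exact h
    field_simp
    linarith
  -- exp (β g) = 1/θ
  have hθne : θ ≠ 0 := ne_of_gt hθ0
  have hexp : exp (β * g x n) = 1 / θ := by
    rw [hF1] at hfix1
    have hpos : 0 < 1 + exp (β * g x n) := by positivity
    have h1 : exp (β * g x n) = x * (1 + exp (β * g x n)) := by
      have := sub_eq_zero.mp hfix1
      field_simp at this
      linarith [this]
    have hx' : x * (1 + θ) = 1 := by rw [hxeq]; field_simp
    have h2 : exp (β * g x n) * θ = 1 := by nlinarith [h1, hx']
    rw [eq_div_iff hθne]
    exact h2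
  have hβg : β * g x n = Real.log (1 / θ) := by
    rw [← Real.log_exp (β * g x n), hexp]
  -- algebraic identity
  have hkey : (1 + θ) * g x n = (δRT0 + θ * δSP0) - D * n := by
    rw [hg, hxeq, ha, hb, hc, hd, hD]
    field_simp
    ring
  have hK : 0 < δRT0 + θ * δSP0 := by nlinarith
  have hDpos : 0 < D := by rw [hD]; nlinarith
  have hlog : 0 < Real.log (1 / θ) := by
    apply Real.log_pos
    rw [lt_div_iff₀ hθ0]; linarith
  -- g value
  have hβne : β ≠ 0 := ne_of_gt hβpos
  have hgval : g x n = β⁻¹ * Real.log (1 / θ) := by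
    field_simp
    linarith [hβg]
  have hDn : D * n = (δRT0 + θ * δSP0) - β⁻¹ * (1 + θ) * Real.log (1 / θ) := by
    have h3 := hkey
    rw [hgval] at h3
    linarith [h3]
  have hneq : n = (δRT0 + θ * δSP0 - β⁻¹ * (1 + θ) * Real.log (1/θ)) / D := by
    rw [eq_div_iff (ne_of_gt hDpos)]
    linarith [hDn]
  refine ⟨?_, hxeq, hneq⟩
  -- β > βint
  have hDn0 : 0 < D * n := mul_pos hDpos hn0
  have hinv : β⁻¹ * (1 + θ) * Real.log (1 / θ) < δRT0 + θ * δSP0 := by linarith [hDn]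
  rw [hβint, div_lt_iff₀ hK]
  have hβinv : β * β⁻¹ = 1 := mul_inv_cancel₀ hβne
  calc (1 + θ) * Real.log (1/θ) = β * (β⁻¹ * (1 + θ) * Real.log (1/θ)) := by
        rw [← mul_assoc, ← mul_assoc, hβinv, one_mul]
    _ < β * (δRT0 + θ * δSP0) := by
        exact (mul_lt_mul_iff_right₀ hβpos).mpr hinv
end

section
/- For every β > 0, the equation b·x + d = T_β(x), where T_β(x) := β^{-1}·log(x/(1−x)), has exactly one solution x in the interval (1/2, 1). Equivalently, the logit system has exactly one tragedy-of-the-commons fixed point (x, 0) with x ∈ (1/2, 1). -/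
set_option autoImplicit false

open Real Set

private lemma toc3_aux
    (b d β : ℝ) (hb0 : 0 < b) (hd0 : d < 0) (hmid : 0 < b * (1/2) + d)
    (hβ : 0 < β) :
    ∃! x : ℝ, x ∈ Ioo (1/2 : ℝ) 1 ∧
      β * (b * x + d) - Real.log x + Real.log (1 - x) = 0 := by
  set h : ℝ → ℝ := fun x => β * (b * x + d) - Real.log x + Real.log (1 - x) with hh
  -- derivative on (0,1)
  have hderiv : ∀ x ∈ Ioo (0:ℝ) 1,
      HasDerivAt h (β * b - x⁻¹ - (1 - x)⁻¹) x := by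
    intro x hx
    have hx0 : x ≠ 0 := ne_of_gt hx.1
    have hx1 : (1 : ℝ) - x ≠ 0 := by have := hx.2; intro hc; linarith [sub_eq_zero.mp hc]
    have h1 : HasDerivAt (fun x : ℝ => β * (b * x + d)) (β * b) x := by
      simpa using (((hasDerivAt_id x).const_mul b).add_const d).const_mul β
    have h2 : HasDerivAt Real.log x⁻¹ x := Real.hasDerivAt_log hx0
    have h3 : HasDerivAt (fun x : ℝ => Real.log (1 - x)) (-(1 - x)⁻¹) x := by
      have hu : HasDerivAt (fun x : ℝ => 1 - x) (-1) x := by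
        simpa using (hasDerivAt_id' x).const_sub (1:ℝ)
      have := (Real.hasDerivAt_log hx1).comp x hu
      rw [show (-(1 - x)⁻¹ : ℝ) = (1 - x)⁻¹ * -1 by ring]; exact this
    have := (h1.sub h2).add h3
    rw [show β * b - x⁻¹ - (1 - x)⁻¹ = β * b - x⁻¹ + -(1 - x)⁻¹ by ring]; exact this
  have hderiv_eq : ∀ x ∈ Ioo (0:ℝ) 1,
      deriv h x = β * b - x⁻¹ - (1 - x)⁻¹ := fun x hx => (hderiv x hx).deriv
  -- continuity on Ico (1/2) 1
  have hcont : ContinuousOn h (Ico (1/2 : ℝ) 1) := by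
    apply ContinuousOn.add
    · apply ContinuousOn.sub
      · exact (continuous_const.mul ((continuous_const.mul continuous_id).add
          continuous_const)).continuousOn
      · apply Real.continuousOn_log.comp continuous_id.continuousOn
        intro x hx
        simp only [id_eq, mem_compl_iff, mem_singleton_iff]
        intro hc
        rw [hc] at hx
        exact absurd hx.1 (by norm_num)
    · apply Real.continuousOn_log.comp ((continuous_const.sub continuous_id).continuousOn)
      intro x hx
      have : x < 1 := hx.2
      simp only [mem_compl_iff, mem_singleton_iff]
      intro hc
      have : (1:ℝ) - x = 0 := hc
      linarith
  -- strict concavity on Ico (1/2) 1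
  have hconc : StrictConcaveOn ℝ (Ico (1/2 : ℝ) 1) h := by
    apply strictConcaveOn_of_deriv2_neg (convex_Ico _ _) hcont
    intro x hx
    rw [interior_Ico] at hx
    have hx01 : x ∈ Ioo (0:ℝ) 1 := ⟨by linarith [hx.1], hx.2⟩
    have hx0 : (0:ℝ) < x := hx01.1
    have hx1 : (0:ℝ) < 1 - x := by linarith [hx.2]
    -- deriv h = g near x
    have hev : deriv h =ᶠ[nhds x] fun y => β * b - y⁻¹ - (1 - y)⁻¹ := by
      filter_upwards [Ioo_mem_nhds hx01.1 hx01.2] with y hy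
      exact hderiv_eq y hy
    have hg : HasDerivAt (fun y : ℝ => β * b - y⁻¹ - (1 - y)⁻¹)
        ((x ^ 2)⁻¹ - ((1 - x) ^ 2)⁻¹) x := by
      have h1 : HasDerivAt (fun y : ℝ => y⁻¹) (-(x ^ 2)⁻¹) x := hasDerivAt_inv (ne_of_gt hx0)
      have hu : HasDerivAt (fun y : ℝ => 1 - y) (-1) x := by
        simpa using (hasDerivAt_id' x).const_sub (1:ℝ)
      have h2 : HasDerivAt (fun y : ℝ => (1 - y)⁻¹) (((1 - x) ^ 2)⁻¹) x := by
        have := (hasDerivAt_inv (ne_of_gt hx1)).comp x hu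
        rw [show ((1 - x) ^ 2)⁻¹ = -((1 - x) ^ 2)⁻¹ * -1 by ring]; exact this
      have := ((hasDerivAt_const x (β * b)).sub h1).sub h2
      rw [show (x ^ 2)⁻¹ - ((1 - x) ^ 2)⁻¹ = 0 - -(x ^ 2)⁻¹ - ((1 - x) ^ 2)⁻¹ by ring]; exact this
    have : deriv^[2] h x = (x ^ 2)⁻¹ - ((1 - x) ^ 2)⁻¹ := by
      show deriv (deriv h) x = _
      rw [hev.deriv_eq]
      exact hg.deriv
    rw [this]
    have hlt : 1 - x < x := by linarith [hx.1]
    have : ((1:ℝ) - x) ^ 2 < x ^ 2 := by nlinarith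
    have h1 : (x ^ 2)⁻¹ < ((1 - x) ^ 2)⁻¹ := inv_strictAnti₀ (by positivity) this
    linarith
  -- h (1/2) > 0
  have hhalf : 0 < h (1/2 : ℝ) := by
    have : h (1/2 : ℝ) = β * (b * (1/2) + d) := by
      simp only [hh]
      norm_num
    rw [this]
    positivity
  -- point near 1 where h < 0
  set C : ℝ := β * b + Real.log 2 + 1 with hC
  set x0 : ℝ := 1 - Real.exp (-C) with hx0def
  have hexp_pos : 0 < Real.exp (-C) := Real.exp_pos _
  have hexp_lt : Real.exp (-C) < 1/2 := by
    have hC2 : Real.log 2 < C := by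
      have : 0 < β * b := by positivity
      simp only [hC]; linarith
    have : Real.exp (-C) < Real.exp (-Real.log 2) := Real.exp_lt_exp.mpr (by linarith)
    calc Real.exp (-C) < Real.exp (-Real.log 2) := this
      _ = 1/2 := by rw [Real.exp_neg, Real.exp_log (by norm_num : (0:ℝ) < 2)]; norm_num
  have hx0mem : x0 ∈ Ioo (1/2 : ℝ) 1 := ⟨by simp only [hx0def]; linarith, by simp only [hx0def]; linarith⟩
  have hx0neg : h x0 < 0 := by
    have h1 : Real.log (1 - x0) = -C := by
      simp only [hx0def]; rw [show (1:ℝ) - (1 - Real.exp (-C)) = Real.exp (-C) by ring,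
        Real.log_exp]
    have h2 : β * (b * x0 + d) ≤ β * b := by
      have hbx : b * x0 + d ≤ b := by nlinarith [hx0mem.2]
      nlinarith
    have h3 : -Real.log x0 ≤ Real.log 2 := by
      have : Real.log (1/2) ≤ Real.log x0 :=
        Real.log_le_log (by norm_num) (le_of_lt hx0mem.1)
      rw [show (1:ℝ)/2 = 2⁻¹ by norm_num, Real.log_inv] at this
      linarith
    have : h x0 = β * (b * x0 + d) - Real.log x0 + (-C) := by rw [hh]; simp [h1]
    rw [this, hC]
    linarith
  -- existence via IVT
  have hsub : Icc (1/2 : ℝ) x0 ⊆ Ico (1/2 : ℝ) 1 :=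
    fun y hy => ⟨hy.1, lt_of_le_of_lt hy.2 hx0mem.2⟩
  have hivt := intermediate_value_Ioo' (le_of_lt hx0mem.1) (hcont.mono hsub)
  have h0mem : (0:ℝ) ∈ Ioo (h x0) (h (1/2 : ℝ)) := ⟨hx0neg, hhalf⟩
  obtain ⟨c, hcmem, hc0⟩ := hivt h0mem
  have hcIoo : c ∈ Ioo (1/2 : ℝ) 1 := ⟨hcmem.1, lt_trans hcmem.2 hx0mem.2⟩
  refine ⟨c, ⟨hcIoo, hc0⟩, ?_⟩
  -- uniqueness via strict concavity
  rintro y ⟨hyIoo, hy0⟩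
  by_contra hne
  -- wlog via both orders
  have key : ∀ u v : ℝ, u ∈ Ioo (1/2 : ℝ) 1 → v ∈ Ioo (1/2 : ℝ) 1 → u < v →
      h u = 0 → h v = 0 → False := by
    intro u v hu hv huv hu0 hv0
    set a : ℝ := (v - u) / (v - 1/2) with ha
    set a' : ℝ := (u - 1/2) / (v - 1/2) with ha'
    have hva : (0:ℝ) < v - 1/2 := by linarith [hv.1]
    have hA : 0 < a := div_pos (by linarith) hva
    have hA' : 0 < a' := div_pos (by linarith [hu.1]) hva
    have hab : a + a' = 1 := by
      rw [ha, ha', ← add_div, div_eq_one_iff_eq (ne_of_gt hva)]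
      ring
    have hcomb : a • (1/2 : ℝ) + a' • v = u := by
      simp only [smul_eq_mul, ha, ha', div_mul_eq_mul_div, ← add_div]
      rw [div_eq_iff (ne_of_gt hva)]
      ring
    have hmem1 : (1/2 : ℝ) ∈ Ico (1/2 : ℝ) 1 := ⟨le_refl _, by norm_num⟩
    have hmem2 : v ∈ Ico (1/2 : ℝ) 1 := ⟨le_of_lt hv.1, hv.2⟩
    have hne12 : (1/2 : ℝ) ≠ v := ne_of_lt (by linarith [hu.1])
    have := hconc.2 hmem1 hmem2 hne12 hA hA' hab
    rw [hcomb, hu0, hv0] at this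
    simp only [smul_eq_mul, mul_zero, add_zero] at this
    nlinarith [hhalf]
  rcases lt_or_gt_of_ne hne with hlt | hgt
  · exact key y c hyIoo hcIoo hlt hy0 hc0
  · exact key c y hcIoo hyIoo hgt hc0 hy0

/-- For every β > 0, the equation b·x + d = T_β(x) has exactly one
solution x in (1/2, 1); i.e. there is exactly one TOC fixed point (x,0) with
x ∈ (1/2, 1). -/
theorem toc3_exists_unique
    (δRT0 δSP0 : ℝ) (hSP0 : δSP0 < 0) (hRT0 : -δSP0 < δRT0)
    (b d : ℝ) (hb : b = δRT0 - δSP0) (hd : d = δSP0)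
    (T : ℝ → ℝ → ℝ) (hT : ∀ β x, T β x = β⁻¹ * Real.log (x / (1 - x))) :
    ∀ β : ℝ, 0 < β →
      ∃! x : ℝ, x ∈ Ioo (1/2 : ℝ) 1 ∧ b * x + d = T β x := by
  intro β hβ
  have hb0 : 0 < b := by rw [hb]; linarith
  have hd0 : d < 0 := by rw [hd]; exact hSP0
  have hmid : 0 < b * (1/2) + d := by rw [hb, hd]; linarith
  obtain ⟨c, ⟨hcI, hc0⟩, huniq⟩ := toc3_aux b d β hb0 hd0 hmid hβ
  -- equivalence of the two equations
  have hequiv : ∀ x : ℝ, x ∈ Ioo (1/2 : ℝ) 1 →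
      ((b * x + d = T β x) ↔
        (β * (b * x + d) - Real.log x + Real.log (1 - x) = 0)) := by
    intro x hx
    have hx0 : x ≠ 0 := by have := hx.1; intro hc; rw [hc] at this; linarith
    have hx1 : (1:ℝ) - x ≠ 0 := by have := hx.2; intro hc; linarith [sub_eq_zero.mp hc]
    rw [hT, Real.log_div hx0 hx1]
    constructor
    · intro heq
      rw [heq]
      field_simp
      ring
    · intro heq
      have : β * (b * x + d) = Real.log x - Real.log (1 - x) := by linarith
      field_simp
      linarith [this]
  refine ⟨c, ⟨hcI, (hequiv c hcI).mpr hc0⟩, ?_⟩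
  rintro y ⟨hyI, hyeq⟩
  exact huniq y ⟨hyI, (hequiv y hyI).mp hyeq⟩
end

section
/- Let x_toc3(β) denote the unique solution in (1/2, 1) of b·x + d = T_β(x). Then x_toc3 is strictly increasing in β for β > 0; moreover, with θ ∈ (0,1), δ_RT0 + θ·δ_SP0 > 0, and β_int := (1+θ)·log(1/θ)/(δ_RT0 + θ·δ_SP0), one has x_toc3(β_int) = 1/(1+θ), and hence x_toc3(β) ≥ 1/(1+θ) for all β ≥ β_int. -/
set_option autoImplicit false
set_option maxHeartbeats 1000000

open Real Set

/-- The unique solution x_toc3(β) ∈ (1/2,1) of b·x + d = T_β(x) is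
strictly increasing in β on (0,∞); moreover x_toc3(β_int) = 1/(1+θ), and hence
x_toc3(β) ≥ 1/(1+θ) for all β ≥ β_int. -/
theorem toc3_monotone
    (δRT0 δSP0 θ : ℝ) (hSP0 : δSP0 < 0) (hRT0 : -δSP0 < δRT0)
    (hθ : θ ∈ Ioo (0:ℝ) 1)
    (b d βint : ℝ) (hb : b = δRT0 - δSP0) (hd : d = δSP0)
    (hβint : βint = (1 + θ) * Real.log (1/θ) / (δRT0 + θ * δSP0))
    (T : ℝ → ℝ → ℝ) (hT : ∀ β x, T β x = β⁻¹ * Real.log (x / (1 - x)))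
    (xtoc3 : ℝ → ℝ)
    (hxtoc3 : ∀ β : ℝ, 0 < β →
      xtoc3 β ∈ Ioo (1/2 : ℝ) 1 ∧ b * xtoc3 β + d = T β (xtoc3 β) ∧
      ∀ y ∈ Ioo (1/2 : ℝ) 1, b * y + d = T β y → y = xtoc3 β) :
    StrictMonoOn xtoc3 (Ioi (0:ℝ)) ∧ xtoc3 βint = 1 / (1 + θ) ∧
      ∀ β : ℝ, βint ≤ β → 1 / (1 + θ) ≤ xtoc3 β := by
  obtain ⟨hθ0, hθ1⟩ := hθ
  have hbpos : 0 < b := by rw [hb]; linarith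
  have hbd : 0 < b + d := by rw [hb, hd]; linarith
  -- strict monotonicity
  have mono : StrictMonoOn xtoc3 (Ioi (0:ℝ)) := by
    intro β1 h1 β2 h2 hlt
    simp only [mem_Ioi] at h1 h2
    obtain ⟨hx1, heq1, -⟩ := hxtoc3 β1 h1
    obtain ⟨-, -, huniq2⟩ := hxtoc3 β2 h2
    set x1 := xtoc3 β1 with hx1def
    have hx1half : (1/2:ℝ) < x1 := hx1.1
    have hx1lt1 : x1 < 1 := hx1.2
    have hx1pos : 0 < x1 := by linarith
    have h1mx1 : 0 < 1 - x1 := by linarith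
    have hratio : 1 < x1 / (1 - x1) := by
      rw [one_lt_div h1mx1]; linarith
    have hLpos : 0 < Real.log (x1 / (1 - x1)) := Real.log_pos hratio
    have hval : Real.log (x1 / (1 - x1)) = β1 * (b * x1 + d) := by
      rw [hT] at heq1
      field_simp at heq1 ⊢
      linarith [heq1]
    have hvalpos : 0 < b * x1 + d := by
      have := hLpos
      rw [hval] at this
      nlinarith
    -- auxiliary function
    set h : ℝ → ℝ := fun x => β2 * (b * x + d) - Real.log (x / (1 - x)) with hdef
    have hhx1 : 0 < h x1 := by
      simp only [hdef, hval]
      nlinarith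
    -- choose c
    set t : ℝ := Real.exp (β2 * (b + d) + 1) with htdef
    have htpos : 0 < t := Real.exp_pos _
    set c0 : ℝ := t / (t + 1) with hc0def
    have hc0lt1 : c0 < 1 := by
      rw [hc0def, div_lt_one (by linarith)]; linarith
    have hc0pos : 0 < c0 := div_pos htpos (by linarith)
    set c : ℝ := max x1 c0 with hcdef
    have hclt1 : c < 1 := max_lt hx1lt1 hc0lt1
    have hcge : x1 ≤ c := le_max_left _ _
    have hcpos : 0 < c := lt_of_lt_of_le hx1pos hcge
    have h1mc : 0 < 1 - c := by linarith
    have hc0c : c0 ≤ c := le_max_right _ _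
    have hratc : c0 / (1 - c0) ≤ c / (1 - c) := by
      rw [div_le_div_iff₀ (by linarith) h1mc]
      nlinarith
    have hLc0 : Real.log (c0 / (1 - c0)) = β2 * (b + d) + 1 := by
      have : c0 / (1 - c0) = t := by
        rw [hc0def]
        field_simp
        ring
      rw [this, htdef, Real.log_exp]
    have hLc : β2 * (b + d) + 1 ≤ Real.log (c / (1 - c)) := by
      rw [← hLc0]
      exact Real.log_le_log (div_pos hc0pos (by linarith)) hratc
    have hhc : h c < 0 := by
      simp only [hdef]
      nlinarith [mul_pos h2 (mul_pos hbpos h1mc), hLc]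
    -- continuity
    have hcont : ContinuousOn h (Icc x1 c) := by
      apply ContinuousOn.sub
      · fun_prop
      · apply ContinuousOn.log
        · apply ContinuousOn.div continuousOn_id (by fun_prop)
          intro x hx
          have : x < 1 := lt_of_le_of_lt hx.2 hclt1
          intro hc'
          rw [sub_eq_zero] at hc'
          linarith
        · intro x hx
          have hx0 : 0 < x := lt_of_lt_of_le hx1pos hx.1
          have hx1' : x < 1 := lt_of_le_of_lt hx.2 hclt1
          have h1mx : 0 < 1 - x := by linarith
          positivity
    have hmem : (0:ℝ) ∈ Icc (h c) (h x1) := ⟨le_of_lt hhc, le_of_lt hhx1⟩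
    obtain ⟨z, hz, hz0⟩ := intermediate_value_Icc' hcge hcont hmem
    have hzIoo : z ∈ Ioo (1/2:ℝ) 1 :=
      ⟨lt_of_lt_of_le hx1half hz.1, lt_of_le_of_lt hz.2 hclt1⟩
    have hzeq : b * z + d = T β2 z := by
      rw [hT]
      have : β2 * (b * z + d) = Real.log (z / (1 - z)) := by
        have := hz0; simp only [hdef] at this; linarith
      field_simp
      linarith [this]
    have hzx2 := huniq2 z hzIoo hzeq
    have hne : x1 ≠ z := by
      intro he
      rw [← he] at hz0
      linarith
    rw [← hzx2]
    exact lt_of_le_of_ne hz.1 hne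
  -- value at βint
  have hden : 0 < 1 + θ := by linarith
  have hlogθ : 0 < Real.log (1/θ) := Real.log_pos (by rw [one_lt_div hθ0]; linarith)
  have hdpos : 0 < δRT0 + θ * δSP0 := by nlinarith
  have hβpos : 0 < βint := by
    rw [hβint]
    positivity
  set y : ℝ := 1 / (1 + θ) with hydef
  have hyIoo : y ∈ Ioo (1/2:ℝ) 1 := by
    constructor
    · rw [hydef, div_lt_div_iff₀ (by norm_num) hden]; linarith
    · rw [hydef, div_lt_one hden]; linarith
  have hyrat : y / (1 - y) = 1/θ := by
    rw [hydef]
    field_simp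
    have h1θ : 1 + θ - 1 = θ := by ring
    rw [h1θ, div_self hθ0.ne']
  have hyeq : b * y + d = T βint y := by
    rw [hT, hyrat, hβint, hb, hd, hydef]
    rw [inv_div]
    field_simp
    ring
  obtain ⟨-, -, huniq⟩ := hxtoc3 βint hβpos
  have hveq : xtoc3 βint = 1 / (1 + θ) := (huniq y hyIoo hyeq).symm
  refine ⟨mono, hveq, ?_⟩
  intro β hβ
  rcases eq_or_lt_of_le hβ with he | hlt
  · rw [← he, hveq]
  · have := mono (mem_Ioi.mpr hβpos) (mem_Ioi.mpr (lt_trans hβpos hlt)) hlt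
    rw [hveq] at this
    linarith
end

section
/- Let x_toc3(β) denote the unique solution in (1/2, 1) of b·x + d = T_β(x). Then x_toc3(β) → 1 as β → ∞. -/
set_option autoImplicit false

open Real Set Filter

/-- The unique solution x_toc3(β) ∈ (1/2,1) of b·x + d = T_β(x)
tends to 1 as β → ∞. -/
theorem toc3_limit
    (δRT0 δSP0 : ℝ) (hSP0 : δSP0 < 0) (hRT0 : -δSP0 < δRT0)
    (b d : ℝ) (hb : b = δRT0 - δSP0) (hd : d = δSP0)
    (T : ℝ → ℝ → ℝ) (hT : ∀ β x, T β x = β⁻¹ * Real.log (x / (1 - x)))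
    (xtoc3 : ℝ → ℝ)
    (hxtoc3 : ∀ β : ℝ, 0 < β →
      xtoc3 β ∈ Ioo (1/2 : ℝ) 1 ∧ b * xtoc3 β + d = T β (xtoc3 β) ∧
      ∀ y ∈ Ioo (1/2 : ℝ) 1, b * y + d = T β y → y = xtoc3 β) :
    Tendsto xtoc3 atTop (nhds 1) := by
  have hb0 : 0 < b := by rw [hb]; linarith
  set m : ℝ := b / 2 + d with hm
  have hm0 : 0 < m := by rw [hm, hb, hd]; linarith
  have key : ∀ β : ℝ, 0 < β → 1 - (1 + Real.exp (β * m))⁻¹ ≤ xtoc3 β := by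
    intro β hβ
    obtain ⟨⟨hx1, hx2⟩, heq, _⟩ := hxtoc3 β hβ
    have h1x : 0 < 1 - xtoc3 β := by linarith
    have hxpos : 0 < xtoc3 β := by linarith
    have hrpos : 0 < xtoc3 β / (1 - xtoc3 β) := div_pos hxpos h1x
    have hlog : Real.log (xtoc3 β / (1 - xtoc3 β)) = β * (b * xtoc3 β + d) := by
      rw [heq, hT]; field_simp
    have hge : β * m ≤ Real.log (xtoc3 β / (1 - xtoc3 β)) := by
      rw [hlog]
      have h1 : m ≤ b * xtoc3 β + d := by
        rw [hm]; nlinarith [mul_pos hb0 (by linarith : (0:ℝ) < xtoc3 β - 1/2)]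
      nlinarith
    have hexp : Real.exp (β * m) ≤ xtoc3 β / (1 - xtoc3 β) := by
      calc Real.exp (β * m) ≤ Real.exp (Real.log (xtoc3 β / (1 - xtoc3 β))) :=
            Real.exp_le_exp.2 hge
        _ = _ := Real.exp_log hrpos
    have h2 : Real.exp (β * m) * (1 - xtoc3 β) ≤ xtoc3 β := (le_div_iff₀ h1x).1 hexp
    have hE : (0:ℝ) < 1 + Real.exp (β * m) := by positivity
    have hinv : (1 + Real.exp (β * m))⁻¹ * (1 + Real.exp (β * m)) = 1 :=
      inv_mul_cancel₀ hE.ne'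
    have hInonneg : 0 ≤ (1 + Real.exp (β * m))⁻¹ := by positivity
    nlinarith [h2, hinv, hE, h1x, hInonneg]
  have hlim : Tendsto (fun β => 1 - (1 + Real.exp (β * m))⁻¹) atTop (nhds 1) := by
    have h1 : Tendsto (fun β : ℝ => 1 + Real.exp (β * m)) atTop atTop :=
      tendsto_atTop_add_const_left _ 1
        (Real.tendsto_exp_atTop.comp (Filter.tendsto_id.atTop_mul_const hm0))
    have h2 : Tendsto (fun β : ℝ => (1 + Real.exp (β * m))⁻¹) atTop (nhds 0) :=
      h1.inv_tendsto_atTop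
    simpa using tendsto_const_nhds.sub h2
  apply tendsto_of_tendsto_of_tendsto_of_le_of_le' hlim tendsto_const_nhds
  · filter_upwards [eventually_gt_atTop (0:ℝ)] with β hβ using key β hβ
  · filter_upwards [eventually_gt_atTop (0:ℝ)] with β hβ using ((hxtoc3 β hβ).1.2).le
end

section
/- Concerning solutions of b·x + d = T_β(x) in the interval (0, 1/2): (i) if 0 < β ≤ 4/b, there are no solutions in (0, 1/2); (ii) for every β > 0, there are at most two solutions in (0, 1/2). -/
set_option autoImplicit false

open Real Set

lemma toc_aux_hasDerivAt (β b d : ℝ) {x : ℝ} (hx0 : 0 < x) (hx1 : x < 1) :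
    HasDerivAt (fun y => β⁻¹ * (Real.log y - Real.log (1 - y)) - (b * y + d))
      (β⁻¹ * (x⁻¹ + (1 - x)⁻¹) - b) x := by
  have h1 : HasDerivAt Real.log x⁻¹ x := Real.hasDerivAt_log (ne_of_gt hx0)
  have h2 : HasDerivAt (fun y : ℝ => 1 - y) (-1) x := (hasDerivAt_id x).const_sub 1
  have h3 : HasDerivAt (fun y : ℝ => Real.log (1 - y)) ((1 - x)⁻¹ * (-1)) x := by
    have hne : (1 : ℝ) - x ≠ 0 := by linarith
    exact (Real.hasDerivAt_log hne).comp x h2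
  have h4 : HasDerivAt (fun y : ℝ => Real.log y - Real.log (1 - y))
      (x⁻¹ - (1 - x)⁻¹ * (-1)) x := h1.sub h3
  have h5 : HasDerivAt (fun y : ℝ => b * y + d) (b * 1) x :=
    ((hasDerivAt_id x).const_mul b).add_const d
  have h6 := (h4.const_mul β⁻¹).sub h5
  refine h6.congr_deriv ?_
  ring

/-- Concerning solutions of b·x + d = T_β(x) in (0, 1/2):
(i) if 0 < β ≤ 4/b, there are no solutions in (0, 1/2);
(ii) for every β > 0, there are at most two solutions in (0, 1/2). -/
theorem toc_small_solutions
    (δRT0 δSP0 : ℝ) (hSP0 : δSP0 < 0) (hRT0 : -δSP0 < δRT0)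
    (b d : ℝ) (hb : b = δRT0 - δSP0) (hd : d = δSP0)
    (T : ℝ → ℝ → ℝ) (hT : ∀ β x, T β x = β⁻¹ * Real.log (x / (1 - x))) :
    (∀ β : ℝ, 0 < β → β ≤ 4 / b →
      ¬ ∃ x ∈ Ioo (0:ℝ) (1/2), b * x + d = T β x) ∧
    (∀ β : ℝ, 0 < β →
      {x : ℝ | x ∈ Ioo (0:ℝ) (1/2) ∧ b * x + d = T β x}.encard ≤ 2) := by
  have hb0 : 0 < b := by rw [hb]; linarith
  have hbd : 0 < b + 2 * d := by rw [hb, hd]; linarith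
  constructor
  · -- Part (i)
    rintro β hβ hβ4 ⟨x, hx, heq⟩
    set f : ℝ → ℝ := fun y => β⁻¹ * (Real.log y - Real.log (1 - y)) - (b * y + d) with hf
    have hx0 : 0 < x := hx.1
    have hx2 : x < 1 / 2 := hx.2
    have hβinv : 0 < β⁻¹ := inv_pos.mpr hβ
    have hfx : f x = 0 := by
      have hlog : Real.log (x / (1 - x)) = Real.log x - Real.log (1 - x) :=
        Real.log_div (ne_of_gt hx0) (by linarith)
      have := hT β x
      simp only [hf]
      rw [← hlog, ← this, ← heq]
      ring
    -- f is strictly monotone on Ioc 0 (1/2)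
    have hcont : ContinuousOn f (Ioc 0 (1 / 2)) := by
      intro y hy
      exact (toc_aux_hasDerivAt β b d hy.1 (by linarith [hy.2])).continuousAt.continuousWithinAt
    have hderiv : ∀ y ∈ interior (Ioc (0:ℝ) (1 / 2)), 0 < deriv f y := by
      rw [interior_Ioc]
      intro y hy
      have hy0 : 0 < y := hy.1
      have hy2 : y < 1 / 2 := hy.2
      have hy1 : y < 1 := by linarith
      rw [(toc_aux_hasDerivAt β b d hy0 hy1).deriv]
      have hpos : 0 < y * (1 - y) := by nlinarith
      have hlt : y * (1 - y) < 1 / 4 := by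
        nlinarith [mul_pos (show (0:ℝ) < 1/2 - y by linarith) (show (0:ℝ) < 1/2 - y by linarith)]
      have hney : (1:ℝ) - y ≠ 0 := by linarith
      have hsum : y⁻¹ + (1 - y)⁻¹ = (y * (1 - y))⁻¹ := by
        field_simp
        ring
      have hinvpos : 0 < (y * (1 - y))⁻¹ := inv_pos.mpr hpos
      have hcancel : (y * (1 - y)) * (y * (1 - y))⁻¹ = 1 := mul_inv_cancel₀ (ne_of_gt hpos)
      have h4lt : 4 < (y * (1 - y))⁻¹ := by nlinarith
      have hbβ : b * β ≤ 4 := by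
        have := (le_div_iff₀ hb0).mp hβ4
        linarith
      have hβcancel : β * β⁻¹ = 1 := mul_inv_cancel₀ (ne_of_gt hβ)
      have hb4 : b ≤ β⁻¹ * 4 := by nlinarith
      rw [hsum]
      nlinarith
    have smono : StrictMonoOn f (Ioc 0 (1 / 2)) :=
      strictMonoOn_of_deriv_pos (convex_Ioc _ _) hcont hderiv
    have hmem1 : x ∈ Ioc (0:ℝ) (1 / 2) := ⟨hx0, le_of_lt hx2⟩
    have hmem2 : (1 / 2 : ℝ) ∈ Ioc (0:ℝ) (1 / 2) := ⟨by norm_num, le_refl _⟩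
    have hlt := smono hmem1 hmem2 hx2
    have hfhalf : f (1 / 2) = -(b * (1 / 2) + d) := by
      simp only [hf]
      ring_nf
    rw [hfx, hfhalf] at hlt
    linarith
  · -- Part (ii)
    intro β hβ
    by_contra hcon
    rw [not_le] at hcon
    set s : Set ℝ := {x : ℝ | x ∈ Ioo (0:ℝ) (1/2) ∧ b * x + d = T β x} with hs
    set f : ℝ → ℝ := fun y => β⁻¹ * (Real.log y - Real.log (1 - y)) - (b * y + d) with hf
    have hβinv : 0 < β⁻¹ := inv_pos.mpr hβ
    have hmem : ∀ x ∈ s, x ∈ Ioo (0:ℝ) (1/2) ∧ f x = 0 := by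
      intro x hxs
      obtain ⟨hx, heq⟩ := hxs
      refine ⟨hx, ?_⟩
      have hlog : Real.log (x / (1 - x)) = Real.log x - Real.log (1 - x) :=
        Real.log_div (ne_of_gt hx.1) (by linarith [hx.2])
      simp only [hf]
      rw [← hlog, ← hT, ← heq]
      ring
    -- Rolle
    have rolle : ∀ u v, u ∈ s → v ∈ s → u < v → ∃ c ∈ Ioo u v, deriv f c = 0 := by
      intro u v hu hv huv
      obtain ⟨hu', hfu⟩ := hmem u hu
      obtain ⟨hv', hfv⟩ := hmem v hv
      have hcont : ContinuousOn f (Icc u v) := by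
        intro y hy
        have hy0 : 0 < y := lt_of_lt_of_le hu'.1 hy.1
        have hy1 : y < 1 := by have := le_trans hy.2 (le_of_lt hv'.2); linarith
        exact (toc_aux_hasDerivAt β b d hy0 hy1).continuousAt.continuousWithinAt
      exact exists_deriv_eq_zero huv hcont (by rw [hfu, hfv])
    -- strict antitonicity of the derivative on (0, 1/2)
    have anti : ∀ c1 c2 : ℝ, c1 ∈ Ioo (0:ℝ) (1/2) → c2 ∈ Ioo (0:ℝ) (1/2) → c1 < c2 →
        deriv f c2 < deriv f c1 := by
      intro c1 c2 h1 h2 h12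
      have h10 : 0 < c1 := h1.1
      have h20 : 0 < c2 := h2.1
      have h11 : c1 < 1 := by linarith [h1.2]
      have h21 : c2 < 1 := by linarith [h2.2]
      rw [(toc_aux_hasDerivAt β b d h10 h11).deriv, (toc_aux_hasDerivAt β b d h20 h21).deriv]
      have hp1 : 0 < c1 * (1 - c1) := by nlinarith
      have hp2 : 0 < c2 * (1 - c2) := by nlinarith
      have hne1 : (1:ℝ) - c1 ≠ 0 := by linarith
      have hne2 : (1:ℝ) - c2 ≠ 0 := by linarith
      have hs1 : c1⁻¹ + (1 - c1)⁻¹ = (c1 * (1 - c1))⁻¹ := by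
        field_simp
        ring
      have hs2 : c2⁻¹ + (1 - c2)⁻¹ = (c2 * (1 - c2))⁻¹ := by
        field_simp
        ring
      have hlt : c1 * (1 - c1) < c2 * (1 - c2) := by nlinarith [h1.2, h2.2]
      have hinv : (c2 * (1 - c2))⁻¹ < (c1 * (1 - c1))⁻¹ := by
        exact inv_strictAnti₀ hp1 hlt
      rw [hs1, hs2]
      have := mul_lt_mul_of_pos_left hinv hβinv
      linarith
    have key : ∀ p q r : ℝ, p ∈ s → q ∈ s → r ∈ s → p < q → q < r → False := by
      intro p q r hp hq hr hpq hqr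
      obtain ⟨c1, hc1, hd1⟩ := rolle p q hp hq hpq
      obtain ⟨c2, hc2, hd2⟩ := rolle q r hq hr hqr
      have hpI := (hmem p hp).1
      have hqI := (hmem q hq).1
      have hrI := (hmem r hr).1
      have hc1I : c1 ∈ Ioo (0:ℝ) (1/2) := ⟨lt_trans hpI.1 hc1.1, lt_trans hc1.2 hqI.2⟩
      have hc2I : c2 ∈ Ioo (0:ℝ) (1/2) := ⟨lt_trans hqI.1 hc2.1, lt_trans hc2.2 hrI.2⟩
      have h12 : c1 < c2 := lt_trans hc1.2 hc2.1
      have := anti c1 c2 hc1I hc2I h12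
      rw [hd1, hd2] at this
      exact lt_irrefl 0 this
    have h3 : 3 ≤ s.encard := Order.add_one_le_of_lt hcon
    obtain ⟨t, hts, ht3⟩ := Set.exists_subset_encard_eq h3
    rw [Set.encard_eq_three] at ht3
    obtain ⟨a, a', a'', hab, hac, hbc, rfl⟩ := ht3
    have ha : a ∈ s := hts (by simp)
    have ha' : a' ∈ s := hts (by simp)
    have ha'' : a'' ∈ s := hts (by simp)
    rcases hab.lt_or_gt with h1 | h1 <;> rcases hac.lt_or_gt with h2 | h2 <;>
      rcases hbc.lt_or_gt with h3' | h3'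
    all_goals first
      | exact key a a' a'' ha ha' ha'' (by linarith) (by linarith)
      | exact key a a'' a' ha ha'' ha' (by linarith) (by linarith)
      | exact key a' a a'' ha' ha ha'' (by linarith) (by linarith)
      | exact key a' a'' a ha' ha'' ha (by linarith) (by linarith)
      | exact key a'' a a' ha'' ha ha' (by linarith) (by linarith)
      | exact key a'' a' a ha'' ha' ha (by linarith) (by linarith)
end

section
/- Let x₀ := −d/b = |δ_SP0|/(δ_RT0 + |δ_SP0|), and note x₀ ∈ (0, 1/2). For every η > 0 there exists B > 0 such that for all β ≥ B: (i) the equation b·x + d = T_β(x) has at least two distinct solutions in (0, 1/2); (ii) every solution x ∈ (0, 1/2) of this equation satisfies x < x₀, and moreover either x < η or |x − x₀| < η; (iii) there is a solution in (0, η) and a solution in (x₀ − η, x₀). -/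
set_option autoImplicit false
set_option maxHeartbeats 1000000

open Real Set

lemma toc_cont_aux (b d β : ℝ) {s : Set ℝ} (hs : s ⊆ Ioo (0:ℝ) 1) :
    ContinuousOn (fun x => b * x + d - β⁻¹ * Real.log (x / (1 - x))) s := by
  apply ContinuousOn.sub
  · exact (by continuity : Continuous fun x : ℝ => b * x + d).continuousOn
  · apply ContinuousOn.mul continuousOn_const
    apply ContinuousOn.log
    · apply ContinuousOn.div continuousOn_id
        (continuousOn_const.sub continuousOn_id)
      intro x hx
      have h := hs hx
      have : (0:ℝ) < 1 - x := by linarith [h.2]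
      exact ne_of_gt this
    · intro x hx
      have h := hs hx
      have : (0:ℝ) < x / (1 - x) := div_pos h.1 (by linarith [h.2])
      exact ne_of_gt this

/-- With x₀ := −d/b ∈ (0, 1/2): for every η > 0 there exists
B > 0 such that for all β ≥ B,
(i) b·x + d = T_β(x) has at least two distinct solutions in (0, 1/2);
(ii) every solution x ∈ (0,1/2) satisfies x < x₀ and (x < η or |x − x₀| < η);
(iii) there is a solution in (0, η) and a solution in (x₀ − η, x₀). -/
theorem toc_small_solutions_large_beta
    (δRT0 δSP0 : ℝ) (hSP0 : δSP0 < 0) (hRT0 : -δSP0 < δRT0)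
    (b d x₀ : ℝ) (hb : b = δRT0 - δSP0) (hd : d = δSP0) (hx₀ : x₀ = -d / b)
    (T : ℝ → ℝ → ℝ) (hT : ∀ β x, T β x = β⁻¹ * Real.log (x / (1 - x))) :
    x₀ = |δSP0| / (δRT0 + |δSP0|) ∧ x₀ ∈ Ioo (0:ℝ) (1/2) ∧
    ∀ η : ℝ, 0 < η → ∃ B : ℝ, 0 < B ∧ ∀ β : ℝ, B ≤ β →
      ((∃ x ∈ Ioo (0:ℝ) (1/2), ∃ y ∈ Ioo (0:ℝ) (1/2), x ≠ y ∧
          b * x + d = T β x ∧ b * y + d = T β y) ∧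
       (∀ x ∈ Ioo (0:ℝ) (1/2), b * x + d = T β x →
          x < x₀ ∧ (x < η ∨ |x - x₀| < η)) ∧
       (∃ x ∈ Ioo (0:ℝ) η, b * x + d = T β x) ∧
       (∃ x ∈ Ioo (x₀ - η) x₀, b * x + d = T β x)) := by
  have hbpos : 0 < b := by rw [hb]; linarith
  have hdneg : d < 0 := by rw [hd]; exact hSP0
  have hx₀pos : 0 < x₀ := by rw [hx₀]; exact div_pos (by linarith) hbpos
  have hbx₀ : b * x₀ = -d := by rw [hx₀]; field_simp
  have hx₀half : x₀ < 1/2 := by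
    rw [hx₀, div_lt_iff₀ hbpos]
    rw [hb, hd]; linarith
  refine ⟨?_, ⟨hx₀pos, hx₀half⟩, ?_⟩
  · rw [hx₀, hb, hd, abs_of_neg hSP0]; ring_nf
  intro η hη
  set η' : ℝ := min η (x₀/4) with hη'def
  have hη'pos : 0 < η' := lt_min hη (by linarith)
  have hη'le : η' ≤ η := min_le_left _ _
  have hη'x₀ : η' ≤ x₀/4 := min_le_right _ _
  have hη'half : η' < 1/2 := by
    calc η' ≤ x₀/4 := hη'x₀
    _ < 1/2 := by linarith
  set C : ℝ := Real.log ((1 - η')/η') with hCdef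
  have hCpos : 0 < C := Real.log_pos (by rw [lt_div_iff₀ hη'pos]; linarith)
  set B : ℝ := max 1 (max (C/(b*η') + 1) (Real.log x₀ / d + 1)) with hBdef
  have hB1 : (1:ℝ) ≤ B := le_max_left _ _
  refine ⟨B, by linarith, ?_⟩
  intro β hβ
  have hβ1 : (1:ℝ) ≤ β := le_trans hB1 hβ
  have hβpos : (0:ℝ) < β := by linarith
  have hβinvpos : (0:ℝ) < β⁻¹ := inv_pos.mpr hβpos
  -- key1 : β⁻¹ * C < b * η'
  have key1 : β⁻¹ * C < b * η' := by
    have h1 : C/(b*η') + 1 ≤ B := le_trans (le_max_left _ _) (le_max_right _ _)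
    have h2 : C/(b*η') < β := by linarith
    rw [div_lt_iff₀ (by positivity)] at h2
    rw [inv_mul_eq_div, div_lt_iff₀ hβpos]
    linarith [h2]
  -- key2 : exp (β*d) < x₀
  have key2 : Real.exp (β*d) < x₀ := by
    have h1 : Real.log x₀ / d + 1 ≤ B := le_trans (le_max_right _ _) (le_max_right _ _)
    have h2 : Real.log x₀ / d < β := by linarith
    have h3 : β * d < Real.log x₀ := by
      rw [div_lt_iff_of_neg hdneg] at h2
      linarith
    calc Real.exp (β*d) < Real.exp (Real.log x₀) := Real.exp_lt_exp.mpr h3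
    _ = x₀ := Real.exp_log hx₀pos
  -- the function
  set f : ℝ → ℝ := fun x => b * x + d - β⁻¹ * Real.log (x / (1 - x)) with hfdef
  have hfeq : ∀ x, b * x + d = T β x ↔ f x = 0 := by
    intro x
    rw [hT, hfdef]
    constructor <;> intro h <;> simp only [] at * <;> linarith
  -- no solution on [η', x₀ - η']
  have hno : ∀ x, η' ≤ x → x ≤ x₀ - η' → f x < 0 := by
    intro x h1 h2
    have hxpos : 0 < x := lt_of_lt_of_le hη'pos h1
    have hxlt : x < 1/2 := by linarith
    have h1x : 0 < 1 - x := by linarith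
    have hratio : η'/(1-η') ≤ x/(1-x) :=
      div_le_div₀ (le_of_lt (lt_of_lt_of_le hη'pos h1)) h1 h1x (by linarith)
    have hlog : -C ≤ Real.log (x/(1-x)) := by
      have h3 : Real.log (η'/(1-η')) ≤ Real.log (x/(1-x)) :=
        Real.log_le_log (div_pos hη'pos (by linarith)) hratio
      have h4 : Real.log (η'/(1-η')) = -C := by
        rw [hCdef, ← Real.log_inv]
        congr 1
        field_simp
      linarith
    have hlin : b * x + d ≤ -(b*η') := by nlinarith [mul_le_mul_of_nonneg_left h2 (le_of_lt hbpos), hbx₀]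
    have : -(β⁻¹ * C) ≤ β⁻¹ * Real.log (x/(1-x)) := by
      nlinarith [mul_le_mul_of_nonneg_left hlog (le_of_lt hβinvpos)]
    simp only [hfdef]
    linarith
  -- f positive at a := exp(β d)/2
  set a : ℝ := Real.exp (β*d) / 2 with hadef
  have hapos : 0 < a := by positivity
  have halt : a < x₀/2 := by
    have := key2; simp only [hadef]; linarith
  have hfa : 0 < f a := by
    have he1 : Real.exp (β*d) < 1 := by
      calc Real.exp (β*d) < x₀ := key2
      _ < 1 := by linarith
    have h1a : (1:ℝ)/2 < 1 - a := by simp only [hadef]; linarith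
    have hfrac : a / (1 - a) < Real.exp (β*d) := by
      rw [div_lt_iff₀ (by linarith)]
      simp only [hadef]
      nlinarith [Real.exp_pos (β*d)]
    have hlog : Real.log (a/(1-a)) < β * d :=
      calc Real.log (a/(1-a)) < Real.log (Real.exp (β*d)) :=
        Real.log_lt_log (div_pos hapos (by linarith)) hfrac
      _ = β * d := Real.log_exp _
    have : β⁻¹ * Real.log (a/(1-a)) < β⁻¹ * (β * d) := by
      exact mul_lt_mul_of_pos_left hlog hβinvpos
    have hβd : β⁻¹ * (β * d) = d := by field_simp
    simp only [hfdef]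
    nlinarith
  -- f negative at x₁ := x₀/2
  set x₁ : ℝ := x₀/2 with hx₁def
  have hx₁mem1 : η' ≤ x₁ := by simp only [hx₁def]; linarith
  have hx₁mem2 : x₁ ≤ x₀ - η' := by simp only [hx₁def]; linarith
  have hfx₁ : f x₁ < 0 := hno x₁ hx₁mem1 hx₁mem2
  -- f positive at x₀
  have hfx₀ : 0 < f x₀ := by
    have h1 : x₀ / (1 - x₀) < 1 := by
      rw [div_lt_one (by linarith)]; linarith
    have h2 : Real.log (x₀/(1-x₀)) < 0 :=
      Real.log_neg (div_pos hx₀pos (by linarith)) h1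
    have h3 : β⁻¹ * Real.log (x₀/(1-x₀)) < 0 := by nlinarith
    simp only [hfdef]
    nlinarith [hbx₀]
  -- IVT on [a, x₁]
  obtain ⟨s₁, hs₁mem, hs₁⟩ : ∃ s ∈ Ioo a x₁, f s = 0 := by
    have hab : a ≤ x₁ := le_of_lt halt
    have hcont : ContinuousOn f (Icc a x₁) := by
      apply toc_cont_aux
      intro x hx
      exact ⟨lt_of_lt_of_le hapos hx.1,
        by have h2 := hx.2; simp only [hx₁def] at h2; linarith⟩
    have h0 : (0:ℝ) ∈ Ioo (f x₁) (f a) := ⟨hfx₁, hfa⟩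
    obtain ⟨s, hsmem, hfs⟩ := intermediate_value_Ioo' hab hcont h0
    exact ⟨s, hsmem, hfs⟩
  -- IVT on [x₁, x₀]
  obtain ⟨s₂, hs₂mem, hs₂⟩ : ∃ s ∈ Ioo x₁ x₀, f s = 0 := by
    have hab : x₁ ≤ x₀ := by simp only [hx₁def]; linarith
    have hcont : ContinuousOn f (Icc x₁ x₀) := by
      apply toc_cont_aux
      intro x hx
      exact ⟨lt_of_lt_of_le (by simp only [hx₁def]; linarith) hx.1, by
        have h2 := hx.2; linarith⟩
    have h0 : (0:ℝ) ∈ Ioo (f x₁) (f x₀) := ⟨hfx₁, hfx₀⟩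
    obtain ⟨s, hsmem, hfs⟩ := intermediate_value_Ioo hab hcont h0
    exact ⟨s, hsmem, hfs⟩
  have hs₁pos : 0 < s₁ := lt_trans hapos hs₁mem.1
  have hs₁half : s₁ < 1/2 := by
    have := hs₁mem.2; simp only [hx₁def] at this; linarith
  have hs₂half : s₂ < 1/2 := lt_trans hs₂mem.2 hx₀half
  have hs₂pos : 0 < s₂ := lt_trans (by simp only [hx₁def]; linarith) hs₂mem.1
  -- s₁ < η'
  have hs₁η' : s₁ < η' := by
    by_contra hcon
    push_neg at hcon
    have h2 : s₁ ≤ x₀ - η' := by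
      have := hs₁mem.2; simp only [hx₁def] at this; linarith
    exact absurd hs₁ (ne_of_lt (hno s₁ hcon h2))
  -- s₂ > x₀ - η'
  have hs₂η' : x₀ - η' < s₂ := by
    by_contra hcon
    push_neg at hcon
    have h1 : η' ≤ s₂ := by
      have := hs₂mem.1; simp only [hx₁def] at this; linarith
    exact absurd hs₂ (ne_of_lt (hno s₂ h1 hcon))
  refine ⟨⟨s₁, ⟨hs₁pos, hs₁half⟩, s₂, ⟨hs₂pos, hs₂half⟩,
      ne_of_lt (lt_trans hs₁mem.2 hs₂mem.1),
      (hfeq s₁).mpr hs₁, (hfeq s₂).mpr hs₂⟩, ?_, ?_, ?_⟩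
  · -- part (ii)
    intro x hx hsol
    have hfx : f x = 0 := (hfeq x).mp hsol
    have hxlt : x < x₀ := by
      have hlog : Real.log (x/(1-x)) < 0 :=
        Real.log_neg (div_pos hx.1 (by linarith [hx.2])) (by
          rw [div_lt_one (by linarith [hx.2])]; linarith [hx.2])
      have h1 : β⁻¹ * Real.log (x/(1-x)) < 0 := by nlinarith
      have h2 : b * x + d < 0 := by
        simp only [hfdef] at hfx; linarith
      nlinarith [hbx₀]
    refine ⟨hxlt, ?_⟩
    by_cases hc : x < η'
    · exact Or.inl (lt_of_lt_of_le hc hη'le)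
    · push_neg at hc
      have h2 : x₀ - η' < x := by
        by_contra hcon
        push_neg at hcon
        exact absurd hfx (ne_of_lt (hno x hc hcon))
      right
      rw [abs_sub_lt_iff]
      constructor <;> [linarith; linarith [hη'le]]
  · -- solution in (0, η)
    exact ⟨s₁, ⟨hs₁pos, lt_of_lt_of_le hs₁η' hη'le⟩, (hfeq s₁).mpr hs₁⟩
  · -- solution in (x₀ - η, x₀)
    exact ⟨s₂, ⟨by linarith [hη'le], hs₂mem.2⟩, (hfeq s₂).mpr hs₂⟩
end

section
/- For every β > 0, the equation (a+b)·x + c + d = T_β(x) has exactly one solution x* in (0, 1), and this solution satisfies x* ∈ (0, 1/2). Equivalently, the logit system has a unique prosperity fixed point (x*, 1), and x* < 1/2. -/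
set_option autoImplicit false

open Real Set

private lemma aux_hasDerivAt (β s k : ℝ) {x : ℝ} (hx : x ∈ Ioo (0:ℝ) 1) :
    HasDerivAt (fun y => β⁻¹ * (Real.log y - Real.log (1-y)) - (s*y + k))
      (β⁻¹ * (x⁻¹ + (1-x)⁻¹) - s) x := by
  have hx0 : x ≠ 0 := ne_of_gt hx.1
  have hx1 : (1:ℝ) - x ≠ 0 := by have := hx.2; intro h; nlinarith [sub_eq_zero.mp h]
  have h1 : HasDerivAt Real.log x⁻¹ x := Real.hasDerivAt_log hx0
  have h2 : HasDerivAt (fun y : ℝ => (1:ℝ) - y) (-1) x := (hasDerivAt_id x).const_sub 1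
  have h3 : HasDerivAt (fun y => Real.log (1-y)) ((1-x)⁻¹ * (-1)) x :=
    (Real.hasDerivAt_log hx1).comp x h2
  have h5 : HasDerivAt (fun y : ℝ => s * y + k) (s * 1) x :=
    ((hasDerivAt_id x).const_mul s).add_const k
  have h4 := ((h1.sub h3).const_mul β⁻¹).sub h5
  exact h4.congr_deriv (by ring)

private lemma aux_hasDerivAt2 (β s : ℝ) {x : ℝ} (hx : x ∈ Ioo (0:ℝ) 1) :
    HasDerivAt (fun y : ℝ => β⁻¹ * (y⁻¹ + (1-y)⁻¹) - s)
      (β⁻¹ * (-(x^2)⁻¹ + ((1-x)^2)⁻¹)) x := by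
  have hx0 : x ≠ 0 := ne_of_gt hx.1
  have hx1 : (1:ℝ) - x ≠ 0 := by have := hx.2; intro h; nlinarith [sub_eq_zero.mp h]
  have h1 : HasDerivAt (fun y : ℝ => y⁻¹) (-(x^2)⁻¹) x := by
    simpa using hasDerivAt_inv hx0
  have h2 : HasDerivAt (fun y : ℝ => (1:ℝ) - y) (-1) x := (hasDerivAt_id x).const_sub 1
  have h3 : HasDerivAt (fun y : ℝ => (1-y)⁻¹) (-((1-x)^2)⁻¹ * (-1)) x := by
    have := (hasDerivAt_inv hx1).comp x h2
    simpa [Function.comp_def] using this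
  have h4 := ((h1.add h3).const_mul β⁻¹).sub_const s
  exact h4.congr_deriv (by ring)

private lemma aux_cont (β s k : ℝ) :
    ContinuousOn (fun y => β⁻¹ * (Real.log y - Real.log (1-y)) - (s*y + k))
      (Ioc (0:ℝ) (1/2)) := by
  apply ContinuousOn.sub
  · apply ContinuousOn.mul continuousOn_const
    apply ContinuousOn.sub
    · exact Real.continuousOn_log.comp continuousOn_id (fun y hy => ne_of_gt hy.1)
    · apply Real.continuousOn_log.comp (continuousOn_const.sub continuousOn_id)
      intro y hy
      simp only [mem_compl_iff, mem_singleton_iff]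
      have : y ≤ 1/2 := hy.2
      intro h
      simp only [Pi.sub_apply, id] at h
      nlinarith [sub_eq_zero.mp h]
  · fun_prop

private lemma aux_concave {β : ℝ} (hβ : 0 < β) (s k : ℝ) :
    StrictConcaveOn ℝ (Ioc (0:ℝ) (1/2))
      (fun y => β⁻¹ * (Real.log y - Real.log (1-y)) - (s*y + k)) := by
  apply strictConcaveOn_of_deriv2_neg (convex_Ioc 0 (1/2)) (aux_cont β s k)
  · intro x hx
    rw [interior_Ioc] at hx
    have hx01 : x ∈ Ioo (0:ℝ) 1 := ⟨hx.1, by linarith [hx.2]⟩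
    have hev : deriv (fun y => β⁻¹ * (Real.log y - Real.log (1-y)) - (s*y + k))
        =ᶠ[nhds x] (fun y : ℝ => β⁻¹ * (y⁻¹ + (1-y)⁻¹) - s) := by
      filter_upwards [Ioo_mem_nhds hx01.1 hx01.2] with y hy
      exact (aux_hasDerivAt β s k hy).deriv
    have : deriv^[2] (fun y => β⁻¹ * (Real.log y - Real.log (1-y)) - (s*y + k)) x
        = β⁻¹ * (-(x^2)⁻¹ + ((1-x)^2)⁻¹) := by
      show deriv (deriv _) x = _
      rw [hev.deriv_eq]
      exact (aux_hasDerivAt2 β s hx01).deriv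
    rw [this]
    have h1 : (0:ℝ) < x := hx.1
    have h2 : x < 1/2 := hx.2
    have hlt : ((1-x)^2)⁻¹ < (x^2)⁻¹ := by
      apply inv_strictAnti₀ (by positivity)
      nlinarith
    have : -(x^2)⁻¹ + ((1-x)^2)⁻¹ < 0 := by linarith
    exact mul_neg_of_pos_of_neg (by positivity) this

/-- For every β > 0, the equation (a+b)·x + c + d = T_β(x) has
exactly one solution x* in (0,1), and it satisfies x* ∈ (0, 1/2); i.e. the
logit system has a unique prosperity fixed point (x*, 1), with x* < 1/2. -/
theorem prosperity_fixed_point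
    (δTR1 δPS1 δRT0 δSP0 : ℝ)
    (hTR1 : 0 < δTR1) (hPS1 : 0 < δPS1) (hSP0 : δSP0 < 0) (hRT0 : -δSP0 < δRT0)
    (a b c d : ℝ)
    (ha : a = δSP0 - δRT0 + δPS1 - δTR1) (hb : b = δRT0 - δSP0)
    (hc : c = -(δPS1 + δSP0)) (hd : d = δSP0)
    (T : ℝ → ℝ → ℝ) (hT : ∀ β x, T β x = β⁻¹ * Real.log (x / (1 - x))) :
    ∀ β : ℝ, 0 < β →
      (∃! x : ℝ, x ∈ Ioo (0:ℝ) 1 ∧ (a + b) * x + c + d = T β x) ∧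
      (∀ x ∈ Ioo (0:ℝ) 1, (a + b) * x + c + d = T β x → x ∈ Ioo (0:ℝ) (1/2)) := by
  intro β hβ
  set s : ℝ := a + b with hs
  set k : ℝ := c + d with hk
  have hsv : s = δPS1 - δTR1 := by rw [hs, ha, hb]; ring
  have hkv : k = -δPS1 := by rw [hk, hc, hd]; ring
  -- the linear part is negative on (0,1)
  have lin_neg : ∀ x : ℝ, 0 < x → x < 1 → s * x + k < 0 := by
    intro x h0 h1
    rw [hsv, hkv]
    nlinarith
  -- define f
  set f : ℝ → ℝ := fun y => β⁻¹ * (Real.log y - Real.log (1-y)) - (s*y + k) with hf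
  have hfeq : ∀ x : ℝ, x ∈ Ioo (0:ℝ) 1 →
      ((a + b) * x + c + d = T β x ↔ f x = 0) := by
    intro x hx
    have hx0 : x ≠ 0 := ne_of_gt hx.1
    have hx1 : (1:ℝ) - x ≠ 0 := by intro h; nlinarith [sub_eq_zero.mp h, hx.2]
    rw [hT, Real.log_div hx0 hx1]
    simp only [hf]
    constructor
    · intro h; linarith [hk]
    · intro h; linarith [hk]
  -- any solution is in (0, 1/2)
  have half : ∀ x ∈ Ioo (0:ℝ) 1, (a + b) * x + c + d = T β x → x ∈ Ioo (0:ℝ) (1/2) := by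
    intro x hx hsol
    refine ⟨hx.1, ?_⟩
    by_contra hge
    push_neg at hge
    have hratio : (1:ℝ) ≤ x / (1 - x) := by
      have h1x : (0:ℝ) < 1 - x := by linarith [hx.2]
      rw [le_div_iff₀ h1x]; linarith
    have hlog : 0 ≤ Real.log (x / (1 - x)) := Real.log_nonneg hratio
    have hTnn : 0 ≤ T β x := by rw [hT]; positivity
    have hneg := lin_neg x hx.1 hx.2
    rw [hs] at hneg
    linarith [hsol, hTnn, hneg]
  -- value at 1/2 is positive
  have fhalf : 0 < f (1/2) := by
    have : Real.log (1/2 : ℝ) - Real.log (1 - 1/2) = 0 := by norm_num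
    have hl := lin_neg (1/2) (by norm_num) (by norm_num)
    simp only [hf]
    norm_num at this ⊢
    linarith
  -- existence of a point with negative value
  obtain ⟨p, hp0, hp2, hfp⟩ : ∃ p : ℝ, 0 < p ∧ p < 1/2 ∧ f p < 0 := by
    set M : ℝ := |s| + |k| with hM
    refine ⟨(1/2) * Real.exp (-(β * M + 1)), by positivity, ?_, ?_⟩
    · have : Real.exp (-(β * M + 1)) < 1 := by
        apply Real.exp_lt_one_iff.mpr
        have : 0 ≤ M := by positivity
        nlinarith
      nlinarith [Real.exp_pos (-(β * M + 1))]
    · set p : ℝ := (1/2) * Real.exp (-(β * M + 1)) with hp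
      have hpp : 0 < p := by positivity
      have hplt : p < 1/2 := by
        have : Real.exp (-(β * M + 1)) < 1 := by
          apply Real.exp_lt_one_iff.mpr
          have : 0 ≤ M := by positivity
          nlinarith
        nlinarith [Real.exp_pos (-(β * M + 1))]
      have hlogp : Real.log p - Real.log (1 - p) ≤ Real.log (2 * p) := by
        have h1p : (1/2 : ℝ) ≤ 1 - p := by linarith
        have : Real.log (1/2 : ℝ) ≤ Real.log (1 - p) :=
          Real.log_le_log (by norm_num) h1p
        have h2p : Real.log (2 * p) = Real.log 2 + Real.log p :=
          Real.log_mul (by norm_num) (ne_of_gt hpp)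
        have hl2 : Real.log (1/2 : ℝ) = - Real.log 2 := by
          rw [one_div, Real.log_inv]
        linarith
      have hlog2p : Real.log (2 * p) = -(β * M + 1) := by
        rw [hp]
        have : (2:ℝ) * ((1/2) * Real.exp (-(β * M + 1))) = Real.exp (-(β * M + 1)) := by ring
        rw [this, Real.log_exp]
      have hTp : β⁻¹ * (Real.log p - Real.log (1-p)) ≤ -M - β⁻¹ := by
        have h1 : Real.log p - Real.log (1-p) ≤ -(β * M + 1) := by
          rw [← hlog2p]; exact hlogp
        have h2 : β⁻¹ * (Real.log p - Real.log (1-p)) ≤ β⁻¹ * (-(β * M + 1)) :=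
          mul_le_mul_of_nonneg_left h1 (by positivity)
        have h3 : β⁻¹ * (-(β * M + 1)) = -M - β⁻¹ := by
          field_simp
          ring
        linarith
      have hLp : -M ≤ s * p + k := by
        have e1 : |s| * p = |s * p| := by rw [abs_mul, abs_of_pos hpp]
        have h1 : -(|s| * p) ≤ s * p := by rw [e1]; exact neg_abs_le _
        have h2 : -|k| ≤ k := neg_abs_le k
        have h3 : |s| * p ≤ |s| * (1/2) :=
          mul_le_mul_of_nonneg_left (le_of_lt hplt) (abs_nonneg s)
        have h4 : 0 ≤ |s| := abs_nonneg s
        linarith [hM]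
      have hβi : 0 < β⁻¹ := by positivity
      simp only [hf]
      clear_value s k M p
      clear lin_neg hfeq half fhalf hf hsv hkv hs hk hlogp hlog2p hM hp
      linarith [hTp, hLp, hβi]
  -- concavity
  have hconc := aux_concave hβ s k
  rw [← hf] at hconc
  -- continuity on [p, 1/2]
  have hcont : ContinuousOn f (Icc p (1/2)) := by
    apply (aux_cont β s k).mono
    intro y hy
    exact ⟨lt_of_lt_of_le hp0 hy.1, hy.2⟩
  -- existence via IVT
  obtain ⟨x₀, hx₀mem, hfx₀⟩ : ∃ x₀ ∈ Ioo p (1/2), f x₀ = 0 := by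
    have h0 : (0:ℝ) ∈ Ioo (f p) (f (1/2)) := ⟨hfp, fhalf⟩
    have := intermediate_value_Ioo (le_of_lt hp2) hcont h0
    obtain ⟨x₀, hx₀, hfx₀⟩ := this
    exact ⟨x₀, hx₀, hfx₀⟩
  clear_value s k f
  have hx₀01 : x₀ ∈ Ioo (0:ℝ) 1 := ⟨lt_trans hp0 hx₀mem.1, by linarith [hx₀mem.2]⟩
  -- uniqueness of zeros in (0,1/2)
  have uniq : ∀ u v : ℝ, u ∈ Ioo (0:ℝ) (1/2) → v ∈ Ioo (0:ℝ) (1/2) →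
      f u = 0 → f v = 0 → u = v := by
    have key : ∀ u v : ℝ, u ∈ Ioo (0:ℝ) (1/2) → v ∈ Ioo (0:ℝ) (1/2) →
        f u = 0 → f v = 0 → u < v → False := by
      intro u v hu hv hfu hfv huv
      set t : ℝ := (1/2 - v)/(1/2 - u) with ht
      clear_value t
      have hud : (0:ℝ) < 1/2 - u := by linarith [hu.2]
      have hud' : (1/2 - u : ℝ) ≠ 0 := ne_of_gt hud
      have ht0 : 0 < t := by
        rw [ht]; exact div_pos (by linarith [hv.2]) hud
      have ht1 : 0 < 1 - t := by
        rw [ht]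
        have : (1/2 - v)/(1/2 - u) < 1 := by
          rw [div_lt_one hud]; linarith
        linarith
      have hsum : t + (1 - t) = 1 := by ring
      have htu : t * (1/2 - u) = 1/2 - v := by
        rw [ht]; exact div_mul_cancel₀ _ hud'
      have hcomb : t • u + (1 - t) • ((1:ℝ)/2) = v := by
        simp only [smul_eq_mul]
        linear_combination (-1 : ℝ) * htu
      have humem : u ∈ Ioc (0:ℝ) (1/2) := ⟨hu.1, le_of_lt hu.2⟩
      have hhmem : (1/2 : ℝ) ∈ Ioc (0:ℝ) (1/2) := ⟨by norm_num, le_refl _⟩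
      have hne : u ≠ 1/2 := ne_of_lt hu.2
      have := hconc.2 humem hhmem hne ht0 ht1 hsum
      rw [hcomb, hfv] at this
      simp only [smul_eq_mul, hfu, mul_zero, zero_add] at this
      linarith [mul_pos ht1 fhalf]
    intro u v hu hv hfu hfv
    rcases lt_trichotomy u v with h | h | h
    · exact absurd (key u v hu hv hfu hfv h) (fun x => x)
    · exact h
    · exact absurd (key v u hv hu hfv hfu h) (fun x => x)
  have hx₀half : x₀ ∈ Ioo (0:ℝ) (1/2) := ⟨hx₀01.1, hx₀mem.2⟩
  rw [hs]
  refine ⟨⟨x₀, ⟨hx₀01, (hfeq x₀ hx₀01).mpr hfx₀⟩, ?_⟩, half⟩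
  rintro y ⟨hy01, hysol⟩
  have hyhalf : y ∈ Ioo (0:ℝ) (1/2) := half y hy01 hysol
  exact uniq y x₀ hyhalf hx₀half ((hfeq y hy01).mp hysol) hfx₀
end

section
/- Let x*(β) denote the unique solution in (0, 1/2) of (a+b)·x + c + d = T_β(x). Then x*(β) is strictly decreasing in β for β > 0, and x*(β) → 0 as β → ∞. -/
set_option autoImplicit false

open Real Set Filter

/-- The unique solution x*(β) ∈ (0,1/2) of
(a+b)·x + c + d = T_β(x) is strictly decreasing in β on (0,∞), and
x*(β) → 0 as β → ∞. -/
theorem prosperity_fixed_point_monotone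
    (δTR1 δPS1 δRT0 δSP0 : ℝ)
    (hTR1 : 0 < δTR1) (hPS1 : 0 < δPS1) (hSP0 : δSP0 < 0) (hRT0 : -δSP0 < δRT0)
    (a b c d : ℝ)
    (ha : a = δSP0 - δRT0 + δPS1 - δTR1) (hb : b = δRT0 - δSP0)
    (hc : c = -(δPS1 + δSP0)) (hd : d = δSP0)
    (T : ℝ → ℝ → ℝ) (hT : ∀ β x, T β x = β⁻¹ * Real.log (x / (1 - x)))
    (xstar : ℝ → ℝ)
    (hxstar : ∀ β : ℝ, 0 < β →
      xstar β ∈ Ioo (0:ℝ) (1/2) ∧ (a + b) * xstar β + c + d = T β (xstar β) ∧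
      ∀ y ∈ Ioo (0:ℝ) 1, (a + b) * y + c + d = T β y → y = xstar β) :
    StrictAntiOn xstar (Ioi (0:ℝ)) ∧ Tendsto xstar atTop (nhds 0) := by
  have hab : a + b = δPS1 - δTR1 := by rw [ha, hb]; ring
  have hcd : c + d = -δPS1 := by rw [hc, hd]; ring
  have hfneg : ∀ x : ℝ, 0 < x → x < 1 → (a + b) * x + c + d < 0 := by
    intro x hx0 hx1
    have h1 : (a + b) * x + c + d = δPS1 * (x - 1) - δTR1 * x := by
      have : c + d = -δPS1 := hcd
      rw [hab]; linarith [this]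
    nlinarith
  -- Key lemma: if the line is strictly below T β at t ∈ (0,1), then xstar β < t.
  have key : ∀ β : ℝ, 0 < β → ∀ t : ℝ, 0 < t → t < 1 →
      (a + b) * t + c + d < T β t → xstar β < t := by
    intro β hβ t ht0 ht1 hlt
    set M := |a + b| + |c + d| with hMdef
    have hM0 : 0 ≤ M := by positivity
    set s := min (t / 2) (Real.exp (-(β * M)) / 4) with hsdef
    have hs0 : 0 < s := lt_min (by linarith) (by positivity)
    have hst : s < t := lt_of_le_of_lt (min_le_left _ _) (by linarith)
    have hs4 : s ≤ Real.exp (-(β * M)) / 4 := min_le_right _ _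
    have hexp1 : Real.exp (-(β * M)) ≤ 1 := by
      rw [Real.exp_le_one_iff]
      nlinarith
    have hs14 : s ≤ 1 / 4 := le_trans hs4 (by linarith)
    have hsfrac : s / (1 - s) < Real.exp (-(β * M)) := by
      rw [div_lt_iff₀ (by linarith)]
      nlinarith [Real.exp_pos (-(β * M))]
    have hlogs : Real.log (s / (1 - s)) < -(β * M) := by
      have h := Real.log_lt_log (div_pos hs0 (by linarith)) hsfrac
      rwa [Real.log_exp] at h
    set h : ℝ → ℝ := fun x => (a + b) * x + c + d - β⁻¹ * Real.log (x / (1 - x))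
      with hhdef
    have hhs : 0 < h s := by
      have h1 : β⁻¹ * Real.log (s / (1 - s)) < -M := by
        have h2 := (mul_lt_mul_iff_right₀ (inv_pos.mpr hβ)).mpr hlogs
        have h3 : β⁻¹ * -(β * M) = -M := by field_simp
        linarith [h3 ▸ h2]
      have h2 : -M ≤ (a + b) * s + c + d := by
        have e1 : -|a + b| ≤ a + b := neg_abs_le _
        have e2 : -|c + d| ≤ c + d := neg_abs_le _
        have e3 : 0 ≤ |a + b| := abs_nonneg _
        nlinarith [mul_le_mul_of_nonneg_right e1 hs0.le]
      simp only [hhdef]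
      linarith
    have hht : h t < 0 := by
      rw [hT] at hlt
      simp only [hhdef]
      linarith
    have hcont : ContinuousOn h (Icc s t) := by
      apply ContinuousOn.sub (by fun_prop)
      apply ContinuousOn.mul continuousOn_const
      have hdiv : ContinuousOn (fun x : ℝ => x / (1 - x)) (Icc s t) := by
        apply ContinuousOn.div continuousOn_id (by fun_prop)
        intro x hx
        have := hx.2
        intro hcontra
        linarith
      exact hdiv.log (fun x hx => ne_of_gt
        (div_pos (lt_of_lt_of_le hs0 hx.1) (by linarith [hx.2])))
    obtain ⟨y, hyI, hy0⟩ := intermediate_value_Icc' hst.le hcont ⟨hht.le, hhs.le⟩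
    have hy01 : y ∈ Ioo (0:ℝ) 1 :=
      ⟨lt_of_lt_of_le hs0 hyI.1, lt_of_le_of_lt hyI.2 ht1⟩
    have hyeq : (a + b) * y + c + d = T β y := by
      rw [hT]
      simp only [hhdef] at hy0
      linarith
    have hxy : y = xstar β := (hxstar β hβ).2.2 y hy01 hyeq
    have hyt : y < t := by
      rcases lt_or_eq_of_le hyI.2 with h' | h'
      · exact h'
      · exfalso; rw [h'] at hy0; linarith
    linarith [hxy ▸ hyt]
  constructor
  · intro β1 hβ1 β2 hβ2 h12
    obtain ⟨hx1mem, hx1eq, _⟩ := hxstar β1 hβ1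
    have hx0 : 0 < xstar β1 := hx1mem.1
    have hx12 : xstar β1 < 1 / 2 := hx1mem.2
    have hfrac : xstar β1 / (1 - xstar β1) < 1 := by
      rw [div_lt_one (by linarith)]; linarith
    have hL : Real.log (xstar β1 / (1 - xstar β1)) < 0 :=
      Real.log_neg (div_pos hx0 (by linarith)) hfrac
    apply key β2 (by exact hβ2) _ hx0 (by linarith)
    rw [hT]
    rw [hT] at hx1eq
    rw [hx1eq]
    have hinv : β2⁻¹ < β1⁻¹ := by
      apply inv_strictAnti₀ (by exact hβ1) h12
    nlinarith
  · rw [tendsto_order]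
    constructor
    · intro l hl
      filter_upwards [eventually_gt_atTop (0:ℝ)] with β hβ
      exact lt_trans hl (hxstar β hβ).1.1
    · intro u hu
      set ε := min u (1 / 4) with hεdef
      have hε0 : 0 < ε := lt_min hu (by norm_num)
      have hε4 : ε ≤ 1 / 4 := min_le_right _ _
      have hF : (a + b) * ε + c + d < 0 := hfneg ε hε0 (by linarith)
      have htend : Tendsto (fun β : ℝ => β⁻¹ * Real.log (ε / (1 - ε))) atTop (nhds 0) := by
        have := (tendsto_inv_atTop_zero (𝕜 := ℝ)).mul_const (Real.log (ε / (1 - ε)))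
        simpa using this
      have hev : ∀ᶠ β in atTop,
          (a + b) * ε + c + d < β⁻¹ * Real.log (ε / (1 - ε)) :=
        htend.eventually (eventually_gt_nhds hF)
      filter_upwards [hev, eventually_gt_atTop (0:ℝ)] with β h1 hβ
      have hk := key β hβ ε hε0 (by linarith) (by rw [hT]; exact h1)
      exact lt_of_lt_of_le hk (min_le_left _ _)
end

section
/- Let β > 0 and let x_t ∈ (0,1) satisfy b·x_t + d = T_β(x_t), so that (x_t, 0) is a tragedy-of-the-commons fixed point. The Jacobian of the logit system at (x_t, 0) is the upper-triangular real 2×2 matrix J = [[β·b·x_t(1−x_t) − 1, β·(a·x_t + c)·x_t(1−x_t)], [0, ε·((1+θ)x_t − 1)]]. Both (complex) eigenvalues of J have negative real part if and only if x_t < 1/(1+θ) and β·b·x_t(1−x_t) < 1. -/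
set_option autoImplicit false

open Real Set

set_option maxHeartbeats 1000000 in
/-- At a TOC fixed point (x_t, 0), the Jacobian of the logit
system is the upper-triangular matrix
J = [[β·b·x_t(1−x_t) − 1, β·(a·x_t + c)·x_t(1−x_t)], [0, ε·((1+θ)x_t − 1)]],
and both complex eigenvalues of J have negative real part if and only if
x_t < 1/(1+θ) and β·b·x_t(1−x_t) < 1. -/
theorem toc_jacobian_and_stability
    (δTR1 δPS1 δRT0 δSP0 θ ε : ℝ)
    (hTR1 : 0 < δTR1) (hPS1 : 0 < δPS1) (hSP0 : δSP0 < 0) (hRT0 : -δSP0 < δRT0)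
    (hθ : θ ∈ Ioo (0:ℝ) 1) (hε : 0 < ε)
    (a b c d : ℝ)
    (ha : a = δSP0 - δRT0 + δPS1 - δTR1) (hb : b = δRT0 - δSP0)
    (hc : c = -(δPS1 + δSP0)) (hd : d = δSP0)
    (g : ℝ → ℝ → ℝ) (hg : ∀ x n, g x n = a * x * n + b * x + c * n + d)
    (β : ℝ) (hβ : 0 < β)
    (T : ℝ → ℝ → ℝ) (hT : ∀ β' x, T β' x = β'⁻¹ * Real.log (x / (1 - x)))
    (F : ℝ × ℝ → ℝ × ℝ)
    (hF : ∀ p : ℝ × ℝ,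
      F p = (exp (β * g p.1 p.2) / (1 + exp (β * g p.1 p.2)) - p.1,
             ε * p.2 * (1 - p.2) * ((1 + θ) * p.1 - 1)))
    (xt : ℝ) (hxt : xt ∈ Ioo (0:ℝ) 1) (hfix : b * xt + d = T β xt)
    (J : Matrix (Fin 2) (Fin 2) ℝ)
    (hJ : J = !![β * b * xt * (1 - xt) - 1, β * (a * xt + c) * (xt * (1 - xt));
                 0, ε * ((1 + θ) * xt - 1)]) :
    HasFDerivAt F
      ((((β * b * xt * (1 - xt) - 1) • (ContinuousLinearMap.fst ℝ ℝ ℝ) +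
         (β * (a * xt + c) * (xt * (1 - xt))) • (ContinuousLinearMap.snd ℝ ℝ ℝ))).prod
        ((ε * ((1 + θ) * xt - 1)) • (ContinuousLinearMap.snd ℝ ℝ ℝ)))
      (xt, 0) ∧
    ((∀ μ : ℂ, ((J.map (algebraMap ℝ ℂ)).charpoly).IsRoot μ → μ.re < 0) ↔
      (xt < 1 / (1 + θ) ∧ β * b * xt * (1 - xt) < 1)) := by
  obtain ⟨hx0, hx1⟩ := hxt
  have hx1' : (0:ℝ) < 1 - xt := by linarith
  obtain ⟨hθ0, hθ1⟩ := hθ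
  have hθpos : (0:ℝ) < 1 + θ := by linarith
  constructor
  · -- Part 1: the derivative
    have hFe : F = fun p : ℝ × ℝ =>
        (exp (β * (a * p.1 * p.2 + b * p.1 + c * p.2 + d)) /
          (1 + exp (β * (a * p.1 * p.2 + b * p.1 + c * p.2 + d))) - p.1,
         ε * p.2 * (1 - p.2) * ((1 + θ) * p.1 - 1)) := by
      funext p; rw [hF, hg]
    rw [hFe]
    have hfix' : β * (a * xt * 0 + b * xt + c * 0 + d) = Real.log (xt / (1 - xt)) := by
      have : a * xt * 0 + b * xt + c * 0 + d = b * xt + d := by ring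
      rw [this, hfix, hT]
      field_simp
    clear hF hFe hfix hT hg hJ
    set P1 := ContinuousLinearMap.fst ℝ ℝ ℝ with hP1
    set P2 := ContinuousLinearMap.snd ℝ ℝ ℝ with hP2
    have h1 : HasFDerivAt (fun p : ℝ × ℝ => p.1) P1 (xt, (0:ℝ)) := hasFDerivAt_fst
    have h2 : HasFDerivAt (fun p : ℝ × ℝ => p.2) P2 (xt, (0:ℝ)) := hasFDerivAt_snd
    have hu0 : HasFDerivAt (fun p : ℝ × ℝ => β * (a * p.1 * p.2 + b * p.1 + c * p.2 + d))
        (β • ((a • (xt • P2) + b • P1) + c • P2)) (xt, 0) := by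
      have hm : HasFDerivAt (fun p : ℝ × ℝ => a * p.1 * p.2)
          (a • (xt • P2)) (xt, 0) := by
        have := (h1.mul h2).const_mul a
        simpa [mul_assoc] using this
      have hsum : HasFDerivAt (fun p : ℝ × ℝ => a * p.1 * p.2 + b * p.1 + c * p.2 + d)
          ((a • (xt • P2) + b • P1) + c • P2) (xt, 0) :=
        ((hm.add (h1.const_mul b)).add (h2.const_mul c)).add_const d
      exact hsum.const_mul β
    have hexp : exp (β * (a * xt * 0 + b * xt + c * 0 + d)) = xt / (1 - xt) := by
      rw [hfix', Real.exp_log (by positivity)]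
    set t0 : ℝ := β * (a * xt * 0 + b * xt + c * 0 + d) with ht0
    have hepos : (0:ℝ) < 1 + exp t0 := by positivity
    have hσ : HasDerivAt (fun t : ℝ => exp t / (1 + exp t))
        ((exp t0 * (1 + exp t0) - exp t0 * (0 + exp t0)) / (1 + exp t0) ^ 2) t0 :=
      (Real.hasDerivAt_exp t0).div ((hasDerivAt_const t0 (1:ℝ)).add (Real.hasDerivAt_exp t0))
        (ne_of_gt hepos)
    have hs : (exp t0 * (1 + exp t0) - exp t0 * (0 + exp t0)) / (1 + exp t0) ^ 2
        = xt * (1 - xt) := by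
      rw [hexp]; field_simp; ring
    rw [hs] at hσ
    have hf1 : HasFDerivAt (fun p : ℝ × ℝ =>
        exp (β * (a * p.1 * p.2 + b * p.1 + c * p.2 + d)) /
          (1 + exp (β * (a * p.1 * p.2 + b * p.1 + c * p.2 + d))) - p.1)
        ((xt * (1 - xt)) • (β • ((a • (xt • P2) + b • P1) + c • P2)) - P1) (xt, 0) :=
        by have hc := HasDerivAt.comp_hasFDerivAt (xt, (0:ℝ)) hσ hu0; exact hc.sub h1
    have hm2 : HasFDerivAt (fun p : ℝ × ℝ => 1 - p.2) (-P2) (xt, (0:ℝ)) := by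
      have := (hasFDerivAt_const (1:ℝ) ((xt, (0:ℝ)))).sub h2; rw [zero_sub] at this; exact this
    have hm3 : HasFDerivAt (fun p : ℝ × ℝ => (1 + θ) * p.1 - 1) ((1 + θ) • P1) (xt, (0:ℝ)) :=
      (h1.const_mul (1 + θ)).sub_const 1
    have hf2 := ((h2.const_mul ε).mul hm2).mul hm3
    refine (HasFDerivAt.prodMk hf1 hf2).congr_fderiv ?_
    refine ContinuousLinearMap.ext fun p => Prod.ext ?_ ?_ <;>
      simp [hP1, hP2] <;> ring
  · -- Part 2: eigenvalues
    have hub : (J.map (algebraMap ℝ ℂ)).BlockTriangular id := by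
      intro i j hij
      fin_cases i <;> fin_cases j <;> simp_all [hJ]
    have hcp : (J.map (algebraMap ℝ ℂ)).charpoly
        = (Polynomial.X - Polynomial.C ((β * b * xt * (1 - xt) - 1 : ℝ) : ℂ)) *
          (Polynomial.X - Polynomial.C ((ε * ((1 + θ) * xt - 1) : ℝ) : ℂ)) := by
      rw [Matrix.charpoly_of_upperTriangular _ hub, Fin.prod_univ_two]
      simp [hJ]
    constructor
    · intro h
      have h1 := h ((β * b * xt * (1 - xt) - 1 : ℝ) : ℂ)
        (by rw [Polynomial.IsRoot, hcp]; simp)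
      have h2 := h ((ε * ((1 + θ) * xt - 1) : ℝ) : ℂ)
        (by rw [Polynomial.IsRoot, hcp]; simp)
      simp only [Complex.ofReal_re] at h1 h2
      constructor
      · rw [lt_div_iff₀ hθpos]
        nlinarith
      · linarith
    · rintro ⟨hA, hB⟩ μ hμ
      rw [Polynomial.IsRoot, hcp] at hμ
      simp only [Polynomial.eval_mul, Polynomial.eval_sub,
        Polynomial.eval_X, Polynomial.eval_C, mul_eq_zero, sub_eq_zero] at hμ
      have hA' : (1 + θ) * xt - 1 < 0 := by
        rw [lt_div_iff₀ hθpos] at hA; nlinarith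
      rcases hμ with rfl | rfl <;> simp only [Complex.ofReal_re]
      · linarith
      · nlinarith
end

section
/- There exists β₁ > 0 such that for all β ≥ β₁: if the equation b·x + d = T_β(x) has solutions in (0, 1/2), then the smallest such solution x₁ satisfies β·b·x₁(1−x₁) < 1 (so the tragedy fixed point (x₁, 0) is locally stable), and there exists β₂ > 0 such that for all β ≥ β₂, if there are two distinct solutions in (0, 1/2), the larger one x₂ satisfies β·b·x₂(1−x₂) > 1 (so (x₂, 0) is unstable). -/
set_option autoImplicit false

open Real Set

lemma toc_hasDerivF (β b d : ℝ) {x : ℝ} (hx0 : 0 < x) (hx1 : x < 1) :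
    HasDerivAt (fun x => Real.log x - Real.log (1 - x) - β*(b*x+d))
      (x⁻¹ + (1-x)⁻¹ - β*b) x := by
  have h1 : HasDerivAt (fun x : ℝ => Real.log x) x⁻¹ x := Real.hasDerivAt_log hx0.ne'
  have h2 : HasDerivAt (fun x : ℝ => (1 - x)) (-1) x := by
    simpa using (hasDerivAt_id x).const_sub 1
  have h3 : HasDerivAt (fun x : ℝ => Real.log (1 - x)) ((1-x)⁻¹ * (-1)) x :=
    (Real.hasDerivAt_log (by norm_num; linarith)).comp x h2
  have h4 : HasDerivAt (fun x : ℝ => β*(b*x+d)) (β*b) x := by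
    have h5 : HasDerivAt (fun x : ℝ => b*x+d) b x := by
      simpa using ((hasDerivAt_id x).const_mul b).add_const d
    simpa [mul_comm] using h5.const_mul β
  have h6 := (h1.sub h3).sub h4
  rw [show x⁻¹ + (1-x)⁻¹ - β*b = x⁻¹ - (1-x)⁻¹ * (-1) - β*b by ring]
  exact h6

lemma toc_sol_iff {β b d x : ℝ} (hβ : 0 < β) (hx0 : 0 < x) (hx1 : x < 1)
    (h : b * x + d = β⁻¹ * Real.log (x / (1 - x))) :
    Real.log x - Real.log (1 - x) - β * (b * x + d) = 0 := by
  have h1 : Real.log (x / (1-x)) = Real.log x - Real.log (1-x) :=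
    Real.log_div hx0.ne' (by linarith)
  rw [h, h1]
  field_simp
  ring

lemma toc_sol_of {β b d r : ℝ} (hβ : 0 < β) (h0 : 0 < r) (h1 : r < 1)
    (h : Real.log r - Real.log (1 - r) - β * (b * r + d) = 0) :
    b * r + d = β⁻¹ * Real.log (r / (1 - r)) := by
  rw [Real.log_div h0.ne' (by linarith : (1:ℝ) - r ≠ 0)]
  field_simp
  linarith

lemma toc_beta_cond {b d : ℝ} (hb : 0 < b) (hd : d < 0) {β : ℝ}
    (hβ : max 1 (((2*Real.sqrt b + 2)/(-d))^2) ≤ β) :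
    Real.log (β*b) + 2 ≤ β*(-d) := by
  have hβ1 : (1:ℝ) ≤ β := le_trans (le_max_left _ _) hβ
  have hβ0 : 0 < β := by linarith
  set s := Real.sqrt β with hs
  have hs1 : (1:ℝ) ≤ s := by
    rw [hs, show (1:ℝ) = Real.sqrt 1 by simp]
    exact Real.sqrt_le_sqrt hβ1
  have hsq : s^2 = β := Real.sq_sqrt (by linarith)
  have hnum : 0 ≤ (2*Real.sqrt b + 2)/(-d) := by
    apply div_nonneg _ (by linarith)
    have := Real.sqrt_nonneg b
    linarith
  have hs2 : (2*Real.sqrt b + 2)/(-d) ≤ s := by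
    rw [hs, show (2*Real.sqrt b + 2)/(-d) = Real.sqrt (((2*Real.sqrt b + 2)/(-d))^2) by
      rw [Real.sqrt_sq hnum]]
    exact Real.sqrt_le_sqrt (le_trans (le_max_right _ _) hβ)
  have hds : 2*Real.sqrt b + 2 ≤ (-d)*s := by
    rw [div_le_iff₀ (by linarith : (0:ℝ) < -d)] at hs2
    linarith [hs2]
  have hlog : Real.log (β*b) ≤ 2*(Real.sqrt (β*b) - 1) := by
    have h1 : Real.log (Real.sqrt (β*b)) = Real.log (β*b) / 2 :=
      Real.log_sqrt (by positivity)
    have h2 : Real.log (Real.sqrt (β*b)) ≤ Real.sqrt (β*b) - 1 :=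
      Real.log_le_sub_one_of_pos (Real.sqrt_pos.2 (by positivity))
    linarith
  have hsb : Real.sqrt (β*b) = s * Real.sqrt b := Real.sqrt_mul (by linarith) b
  have hsbb : 0 ≤ Real.sqrt b := Real.sqrt_nonneg b
  have key : s*(2*Real.sqrt b + 2) ≤ s*((-d)*s) := by
    apply mul_le_mul_of_nonneg_left hds (by linarith)
  have hβs : β*(-d) = s*((-d)*s) := by rw [← hsq]; ring
  nlinarith [hlog, hsb, hs1, hsbb]

/-- There exists β₁ > 0 such that for all β ≥ β₁, the smallest
solution x₁ of b·x + d = T_β(x) in (0, 1/2) (if solutions exist) satisfies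
β·b·x₁(1−x₁) < 1 (local stability of (x₁,0)); and there exists β₂ > 0 such
that for all β ≥ β₂, if there are two distinct solutions in (0,1/2), the
larger one x₂ satisfies β·b·x₂(1−x₂) > 1 (instability of (x₂,0)). -/
theorem toc1_stable_toc2_unstable
    (δRT0 δSP0 θ : ℝ) (hSP0 : δSP0 < 0) (hRT0 : -δSP0 < δRT0)
    (hθ : θ ∈ Ioo (0:ℝ) 1)
    (b d : ℝ) (hb : b = δRT0 - δSP0) (hd : d = δSP0)
    (T : ℝ → ℝ → ℝ) (hT : ∀ β x, T β x = β⁻¹ * Real.log (x / (1 - x))) :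
    (∃ β₁ : ℝ, 0 < β₁ ∧ ∀ β : ℝ, β₁ ≤ β →
      ∀ x₁ : ℝ, x₁ ∈ Ioo (0:ℝ) (1/2) → b * x₁ + d = T β x₁ →
        (∀ y ∈ Ioo (0:ℝ) (1/2), b * y + d = T β y → x₁ ≤ y) →
        β * b * x₁ * (1 - x₁) < 1) ∧
    (∃ β₂ : ℝ, 0 < β₂ ∧ ∀ β : ℝ, β₂ ≤ β →
      ∀ x₂ : ℝ, x₂ ∈ Ioo (0:ℝ) (1/2) → b * x₂ + d = T β x₂ →
        (∃ y ∈ Ioo (0:ℝ) (1/2), b * y + d = T β y ∧ y < x₂) →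
        (∀ y ∈ Ioo (0:ℝ) (1/2), b * y + d = T β y → y ≤ x₂) →
        1 < β * b * x₂ * (1 - x₂)) := by
  have hb0 : 0 < b := by rw [hb]; linarith
  have hd0 : d < 0 := by rw [hd]; exact hSP0
  constructor
  · -- Part 1: stability of the smallest root
    refine ⟨max 1 (((2*Real.sqrt b + 2)/(-d))^2),
      lt_of_lt_of_le one_pos (le_max_left _ _), ?_⟩
    intro β hβ x₁ hx₁ hsol hmin
    have hβ1 : (1:ℝ) ≤ β := le_trans (le_max_left _ _) hβ
    have hβ0 : 0 < β := by linarith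
    obtain ⟨hx₁0, hx₁h⟩ := hx₁
    have hβb : 0 < β*b := mul_pos hβ0 hb0
    have hFx₁ : Real.log x₁ - Real.log (1 - x₁) - β*(b*x₁+d) = 0 :=
      toc_sol_iff hβ0 hx₁0 (by linarith) (by rw [← hT]; exact hsol)
    by_contra hcon
    push_neg at hcon
    -- hcon : 1 ≤ β * b * x₁ * (1 - x₁)
    have hm : ∃ m, 0 < m ∧ m ≤ x₁ ∧ β*b*m*(1-m) = 1 := by
      rcases eq_or_lt_of_le hcon with heq | hlt
      · exact ⟨x₁, hx₁0, le_refl _, heq.symm⟩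
      · have hc : ContinuousOn (fun t : ℝ => β*b*t*(1-t)) (Icc 0 x₁) := by fun_prop
        have hmem : (1:ℝ) ∈ Ioo ((fun t : ℝ => β*b*t*(1-t)) 0) ((fun t : ℝ => β*b*t*(1-t)) x₁) := by
          simp only []
          constructor
          · norm_num
          · exact hlt
        obtain ⟨m, hmI, hme⟩ := intermediate_value_Ioo (le_of_lt hx₁0) hc hmem
        exact ⟨m, hmI.1, le_of_lt hmI.2, hme⟩
    obtain ⟨m, hm0, hmx, hme⟩ := hm
    have hmh : m < 1/2 := lt_of_le_of_lt hmx hx₁h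
    have hm1 : 1/(β*b) < m := by
      rw [div_lt_iff₀ hβb]
      nlinarith [mul_pos (mul_pos hβb hm0) hm0]
    have hm2 : β*b*m < 2 := by nlinarith
    have hcond := toc_beta_cond hb0 hd0 hβ
    have hlogm : -Real.log (β*b) < Real.log m := by
      have h := Real.log_lt_log (by positivity : (0:ℝ) < 1/(β*b)) hm1
      rwa [one_div, Real.log_inv] at h
    have hlog1m : Real.log (1-m) ≤ 0 := Real.log_nonpos (by linarith) (by linarith)
    have hFm : 0 < Real.log m - Real.log (1 - m) - β*(b*m+d) := by
      have hexp : β*(b*m+d) = β*b*m + β*d := by ring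
      linarith
    rcases eq_or_lt_of_le hmx with heq | hmlt
    · rw [heq] at hFm; linarith
    · set c := min (m/2) (Real.exp (β*d - Real.log 2 - 1)) with hc
      have hc0 : 0 < c := lt_min (by linarith) (Real.exp_pos _)
      have hcm : c < m := lt_of_le_of_lt (min_le_left _ _) (by linarith)
      have hFc : Real.log c - Real.log (1 - c) - β*(b*c+d) < 0 := by
        have hlc : Real.log c ≤ β*d - Real.log 2 - 1 := by
          calc Real.log c ≤ Real.log (Real.exp (β*d - Real.log 2 - 1)) :=
                Real.log_le_log hc0 (min_le_right _ _)
            _ = β*d - Real.log 2 - 1 := Real.log_exp _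
        have h1c : -Real.log 2 < Real.log (1-c) := by
          have h := Real.log_lt_log (by norm_num : (0:ℝ) < 1/2) (by linarith : (1:ℝ)/2 < 1-c)
          rwa [one_div, Real.log_inv] at h
        have hbc : 0 ≤ β*b*c := by positivity
        have hexp : β*(b*c+d) = β*b*c + β*d := by ring
        linarith
      have hcont : ContinuousOn (fun x => Real.log x - Real.log (1 - x) - β*(b*x+d)) (Icc c m) := by
        intro t ht
        exact ((toc_hasDerivF β b d (lt_of_lt_of_le hc0 ht.1)
          (by linarith [ht.2] : t < 1)).continuousAt).continuousWithinAt
      obtain ⟨r, hrI, hrF⟩ := intermediate_value_Ioo (le_of_lt hcm) hcont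
        (show (0:ℝ) ∈ Ioo _ _ from ⟨hFc, hFm⟩)
      have hr0 : 0 < r := lt_trans hc0 hrI.1
      have hrh : r < 1/2 := lt_trans hrI.2 hmh
      have hrsol : b*r + d = T β r := by
        rw [hT]; exact toc_sol_of hβ0 hr0 (by linarith) hrF
      have := hmin r ⟨hr0, hrh⟩ hrsol
      linarith [hrI.2]
  · -- Part 2: instability of the larger root
    refine ⟨1, one_pos, ?_⟩
    intro β hβ1 x₂ hx₂ hsol hex _
    obtain ⟨y, hy, hysol, hyx⟩ := hex
    have hβ0 : 0 < β := by linarith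
    obtain ⟨hy0, hyh⟩ := hy
    obtain ⟨hx0, hxh⟩ := hx₂
    have hβb : 0 < β*b := mul_pos hβ0 hb0
    have hFy : Real.log y - Real.log (1 - y) - β*(b*y+d) = 0 :=
      toc_sol_iff hβ0 hy0 (by linarith) (by rw [← hT]; exact hysol)
    have hFx : Real.log x₂ - Real.log (1 - x₂) - β*(b*x₂+d) = 0 :=
      toc_sol_iff hβ0 hx0 (by linarith) (by rw [← hT]; exact hsol)
    have hcont : ContinuousOn (fun x => Real.log x - Real.log (1 - x) - β*(b*x+d)) (Icc y x₂) := by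
      intro t ht
      exact ((toc_hasDerivF β b d (lt_of_lt_of_le hy0 ht.1)
        (by linarith [ht.2] : t < 1)).continuousAt).continuousWithinAt
    have hderiv : ∀ x ∈ Ioo y x₂,
        HasDerivAt (fun x => Real.log x - Real.log (1 - x) - β*(b*x+d))
          (x⁻¹ + (1-x)⁻¹ - β*b) x := by
      intro x hx
      exact toc_hasDerivF β b d (lt_trans hy0 hx.1) (by linarith [hx.2])
    obtain ⟨ξ, hξI, hξ⟩ := exists_hasDerivAt_eq_zero hyx (hcont) (by rw [hFy, hFx]) hderiv
    have hξ0 : 0 < ξ := lt_trans hy0 hξI.1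
    have hξx : ξ < x₂ := hξI.2
    have hξ1 : ξ < 1/2 := lt_trans hξx hxh
    have heq : β*b*(ξ*(1-ξ)) = 1 := by
      have h1 : ξ ≠ 0 := hξ0.ne'
      have h2 : (1:ℝ) - ξ ≠ 0 := by linarith
      field_simp at hξ
      nlinarith [hξ]
    have hp : 0 < β*b*((x₂-ξ)*(1-x₂-ξ)) :=
      mul_pos hβb (mul_pos (by linarith) (by linarith))
    nlinarith [heq, hp]
end

section
/- For β > β_int, define the trace of the Jacobian of the logit system at the interior fixed point as tr(β) := β·(a·n_int(β) + b)/(θ·(1+θ^{-1})²) − 1. Then tr(β) < 0 if and only if β < β_h, where β_h := (a·n̄ + b)^{-1}·( θ·(1+θ^{-1})² + (a·(1+θ)/D)·log(1/θ) ). Consequently the interior fixed point's Jacobian has negative trace exactly for β_int < β < β_h. -/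
set_option autoImplicit false

open Real Set

/-- For β > β_int, the trace of the Jacobian at the interior
fixed point, tr(β) = β·(a·n_int(β) + b)/(θ·(1+θ⁻¹)²) − 1, satisfies
tr(β) < 0 ↔ β < β_h; so the trace is negative exactly for β_int < β < β_h. -/
theorem interior_trace_negative_iff
    (δTR1 δPS1 δRT0 δSP0 θ : ℝ)
    (hTR1 : 0 < δTR1) (hPS1 : 0 < δPS1) (hSP0 : δSP0 < 0) (hRT0 : -δSP0 < δRT0)
    (hθ : θ ∈ Ioo (0:ℝ) 1)
    (a b D nbar βint βh : ℝ)
    (ha : a = δSP0 - δRT0 + δPS1 - δTR1) (hb : b = δRT0 - δSP0)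
    (hD : D = δRT0 + θ * δSP0 + δTR1 + θ * δPS1)
    (hnbar : nbar = (δRT0 + θ * δSP0) / D)
    (hβint : βint = (1 + θ) * Real.log (1/θ) / (δRT0 + θ * δSP0))
    (hβh : βh = (a * nbar + b)⁻¹ *
      (θ * (1 + θ⁻¹)^2 + (a * (1 + θ) / D) * Real.log (1/θ)))
    (nint : ℝ → ℝ)
    (hnint : ∀ β : ℝ,
      nint β = (δRT0 + θ * δSP0 - β⁻¹ * (1 + θ) * Real.log (1/θ)) / D)
    (tr : ℝ → ℝ)
    (htr : ∀ β : ℝ, tr β = β * (a * nint β + b) / (θ * (1 + θ⁻¹)^2) - 1) :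
    ∀ β : ℝ, βint < β → (tr β < 0 ↔ β < βh) := by
  obtain ⟨hθ0, hθ1⟩ := hθ
  intro β hβ
  have hK : 0 < δRT0 + θ * δSP0 := by nlinarith
  have hL : 0 < Real.log (1/θ) := Real.log_pos (by rw [lt_div_iff₀ hθ0]; linarith)
  have hDpos : 0 < D := by rw [hD]; nlinarith
  have hD0 : D ≠ 0 := ne_of_gt hDpos
  have hC : 0 < θ * (1 + θ⁻¹)^2 := by positivity
  have hβint_pos : 0 < βint := by
    rw [hβint]; exact div_pos (mul_pos (by linarith) hL) hK
  have hβ0 : 0 < β := lt_trans hβint_pos hβ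
  have hβne : β ≠ 0 := ne_of_gt hβ0
  have h2 : 0 < a * (δRT0 + θ * δSP0) + b * D := by
    rw [ha, hb, hD]
    nlinarith [mul_pos hPS1 hK, mul_pos hTR1 (show 0 < -(1+θ)*δSP0 by nlinarith),
      mul_pos (mul_pos hθ0 hPS1) (show 0 < δRT0 - δSP0 by linarith)]
  have hM : 0 < a * nbar + b := by
    have hmd : a * nbar + b = (a * (δRT0 + θ * δSP0) + b * D) / D := by
      rw [hnbar]; field_simp
    rw [hmd]; exact div_pos h2 hDpos
  have key : β * (a * ((δRT0 + θ * δSP0 - β⁻¹ * (1 + θ) * Real.log (1/θ)) / D) + b)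
      = β * (a * nbar + b) - a * (1 + θ) * Real.log (1/θ) / D := by
    rw [hnbar]; field_simp; ring
  have hβhM : βh * (a * nbar + b)
      = θ * (1 + θ⁻¹)^2 + a * (1 + θ) * Real.log (1/θ) / D := by
    rw [hβh, inv_mul_eq_div, div_mul_eq_mul_div,
      mul_div_assoc, div_self (ne_of_gt hM), mul_one]
    ring
  rw [htr β, hnint β, key, sub_neg, div_lt_one hC]
  constructor
  · intro h
    have h3 : β * (a * nbar + b) < βh * (a * nbar + b) := by rw [hβhM]; linarith
    exact (mul_lt_mul_iff_of_pos_right hM).mp h3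
  · intro h
    have h3 := (mul_lt_mul_iff_of_pos_right hM).mpr h
    rw [hβhM] at h3; linarith
end

section
/- Under the standing assumptions, a·x_int + c < 0 where x_int := 1/(1+θ); indeed −(a·x_int + c) = D/(1+θ) > 0. Consequently, for every β > β_int and ε > 0, the determinant of the Jacobian of the logit system at the interior fixed point, det J_int = −ε·β·(a·x_int + c)·n_int(β)·(1−n_int(β))·(1+θ)/(θ·(1+θ^{-1})²), is strictly positive. -/
set_option autoImplicit false

open Real Set

/-- a·x_int + c < 0 with −(a·x_int + c) = D/(1+θ) > 0, and for
every β > β_int the determinant of the Jacobian at the interior fixed point,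
det J_int = −ε·β·(a·x_int + c)·n_int(β)·(1−n_int(β))·(1+θ)/(θ·(1+θ⁻¹)²),
is strictly positive. -/
theorem interior_det_positive
    (δTR1 δPS1 δRT0 δSP0 θ ε : ℝ)
    (hTR1 : 0 < δTR1) (hPS1 : 0 < δPS1) (hSP0 : δSP0 < 0) (hRT0 : -δSP0 < δRT0)
    (hθ : θ ∈ Ioo (0:ℝ) 1) (hε : 0 < ε)
    (a b c d D βint xint : ℝ)
    (ha : a = δSP0 - δRT0 + δPS1 - δTR1) (hb : b = δRT0 - δSP0)
    (hc : c = -(δPS1 + δSP0)) (hd : d = δSP0)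
    (hD : D = δRT0 + θ * δSP0 + δTR1 + θ * δPS1)
    (hβint : βint = (1 + θ) * Real.log (1/θ) / (δRT0 + θ * δSP0))
    (hxint : xint = 1 / (1 + θ))
    (nint : ℝ → ℝ)
    (hnint : ∀ β : ℝ,
      nint β = (δRT0 + θ * δSP0 - β⁻¹ * (1 + θ) * Real.log (1/θ)) / D) :
    a * xint + c < 0 ∧ -(a * xint + c) = D / (1 + θ) ∧ 0 < D / (1 + θ) ∧
    ∀ β : ℝ, βint < β →
      0 < -ε * β * (a * xint + c) * nint β * (1 - nint β) * (1 + θ) /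
          (θ * (1 + θ⁻¹)^2) := by
  obtain ⟨hθ0, hθ1⟩ := hθ
  have h1θ : (0:ℝ) < 1 + θ := by linarith
  have hA : 0 < δRT0 + θ * δSP0 := by nlinarith
  have hDpos : 0 < D := by rw [hD]; nlinarith
  have hL : 0 < (1 + θ) * Real.log (1/θ) := by
    apply mul_pos h1θ
    apply Real.log_pos
    rw [one_div]
    exact (one_lt_inv_iff₀).2 ⟨hθ0, hθ1⟩
  have hkey : a * xint + c = -(D / (1 + θ)) := by
    rw [ha, hc, hxint, hD]
    field_simp
    ring
  have hneg : a * xint + c < 0 := by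
    rw [hkey]; exact neg_neg_iff_pos.2 (div_pos hDpos h1θ)
  refine ⟨hneg, by rw [hkey]; ring, div_pos hDpos h1θ, ?_⟩
  intro β hβ
  have hβint0 : 0 < βint := by rw [hβint]; exact div_pos hL hA
  have hβ0 : 0 < β := lt_trans hβint0 hβ
  have hinv : β⁻¹ * ((1 + θ) * Real.log (1/θ)) < δRT0 + θ * δSP0 := by
    have h2 : β⁻¹ < βint⁻¹ := by
      exact inv_strictAnti₀ hβint0 hβ
    have h3 : βint⁻¹ = (δRT0 + θ * δSP0) / ((1 + θ) * Real.log (1/θ)) := by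
      rw [hβint]; field_simp
    calc β⁻¹ * ((1 + θ) * Real.log (1/θ))
        < βint⁻¹ * ((1 + θ) * Real.log (1/θ)) := by
          exact mul_lt_mul_of_pos_right h2 hL
      _ = δRT0 + θ * δSP0 := by rw [h3]; field_simp; exact div_self (pos_of_mul_pos_right hL h1θ.le).ne'
  have hn0 : 0 < nint β := by
    rw [hnint β]
    apply div_pos _ hDpos
    nlinarith
  have hn1 : nint β < 1 := by
    rw [hnint β]
    rw [div_lt_one hDpos, hD]
    have : 0 < β⁻¹ * (1 + θ) * Real.log (1/θ) := by
      have := mul_pos (inv_pos.2 hβ0) hL; nlinarith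
    nlinarith
  have hden : 0 < θ * (1 + θ⁻¹)^2 := by positivity
  apply div_pos _ hden
  have h5 : 0 < -(a * xint + c) := by linarith
  have : 0 < (ε * β * -(a * xint + c)) * nint β * (1 - nint β) * (1 + θ) := by
    apply mul_pos (mul_pos (mul_pos (mul_pos (mul_pos hε hβ0) h5) hn0) (by linarith)) h1θ
  nlinarith [this]
end

section
/- Under the standing assumptions, the identity a·n̄ + b = (1+θ)·(δ_RT0·δ_PS1 − δ_SP0·δ_TR1)/D holds, and this quantity is strictly positive. -/
set_option autoImplicit false

open Real Set

/-- The identity a·n̄ + b = (1+θ)·(δ_RT0·δ_PS1 − δ_SP0·δ_TR1)/D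
holds, and this quantity is strictly positive. -/
theorem anbar_plus_b_identity
    (δTR1 δPS1 δRT0 δSP0 θ : ℝ)
    (hTR1 : 0 < δTR1) (hPS1 : 0 < δPS1) (hSP0 : δSP0 < 0) (hRT0 : -δSP0 < δRT0)
    (hθ : θ ∈ Ioo (0:ℝ) 1)
    (a b D nbar : ℝ)
    (ha : a = δSP0 - δRT0 + δPS1 - δTR1) (hb : b = δRT0 - δSP0)
    (hD : D = δRT0 + θ * δSP0 + δTR1 + θ * δPS1)
    (hnbar : nbar = (δRT0 + θ * δSP0) / D) :
    a * nbar + b = (1 + θ) * (δRT0 * δPS1 - δSP0 * δTR1) / D ∧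
    0 < a * nbar + b := by
  obtain ⟨hθ0, hθ1⟩ := hθ
  have hD0 : 0 < D := by nlinarith
  have hid : a * nbar + b = (1 + θ) * (δRT0 * δPS1 - δSP0 * δTR1) / D := by
    subst ha hb hD hnbar
    rw [mul_div_assoc', div_add' _ _ _ hD0.ne', div_left_inj' hD0.ne']
    ring
  refine ⟨hid, ?_⟩
  rw [hid]
  have : 0 < δRT0 * δPS1 - δSP0 * δTR1 := by nlinarith
  positivity
end

section
/- Suppose β_h > β_int, where β_h := (a·n̄ + b)^{-1}·( θ·(1+θ^{-1})² + (a·(1+θ)/D)·log(1/θ) ). Then at β = β_h the Jacobian J_int of the logit system at the interior fixed point (1/(1+θ), n_int(β_h)) has trace zero and determinant ω² > 0; hence its characteristic polynomial is λ² + ω² and its complex eigenvalues are the purely imaginary conjugate pair ± i·ω with ω = √(det J_int) > 0. -/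
set_option autoImplicit false

open Real Set Polynomial

/-- If β_h > β_int then at β = β_h the Jacobian J_int of the
logit system at the interior fixed point has trace zero and determinant
ω² > 0 with ω = √(det J_int) > 0; its characteristic polynomial is λ² + ω²
and its complex eigenvalues are the purely imaginary pair ± i·ω. -/
theorem hopf_purely_imaginary_eigenvalues
    (δTR1 δPS1 δRT0 δSP0 θ ε : ℝ)
    (hTR1 : 0 < δTR1) (hPS1 : 0 < δPS1) (hSP0 : δSP0 < 0) (hRT0 : -δSP0 < δRT0)
    (hθ : θ ∈ Ioo (0:ℝ) 1) (hε : 0 < ε)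
    (a b c d D nbar βint βh : ℝ)
    (ha : a = δSP0 - δRT0 + δPS1 - δTR1) (hb : b = δRT0 - δSP0)
    (hc : c = -(δPS1 + δSP0)) (hd : d = δSP0)
    (hD : D = δRT0 + θ * δSP0 + δTR1 + θ * δPS1)
    (hnbar : nbar = (δRT0 + θ * δSP0) / D)
    (hβint : βint = (1 + θ) * Real.log (1/θ) / (δRT0 + θ * δSP0))
    (hβh : βh = (a * nbar + b)⁻¹ *
      (θ * (1 + θ⁻¹)^2 + (a * (1 + θ) / D) * Real.log (1/θ)))
    (hgap : βint < βh)
    (nh : ℝ)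
    (hnh : nh = (δRT0 + θ * δSP0 - βh⁻¹ * (1 + θ) * Real.log (1/θ)) / D)
    (J : Matrix (Fin 2) (Fin 2) ℝ)
    (hJ : J = !![βh * (a * nh + b) / (θ * (1 + θ⁻¹)^2) - 1,
                 βh * (a / (1 + θ) + c) / (θ * (1 + θ⁻¹)^2);
                 ε * nh * (1 - nh) * (1 + θ), 0])
    (ω : ℝ) (hω : ω = Real.sqrt J.det) :
    J.trace = 0 ∧ 0 < J.det ∧ J.det = ω^2 ∧ 0 < ω ∧
    (J.map (algebraMap ℝ ℂ)).charpoly = X^2 + C ((ω:ℂ)^2) ∧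
    (∀ μ : ℂ, ((J.map (algebraMap ℝ ℂ)).charpoly).IsRoot μ ↔
      (μ = Complex.I * ω ∨ μ = -(Complex.I * ω))) := by
  obtain ⟨hθ0, hθ1⟩ := hθ
  have hθne : θ ≠ 0 := ne_of_gt hθ0
  have h1θ : (0:ℝ) < 1 + θ := by linarith
  have h1θ' : (1:ℝ) + θ ≠ 0 := ne_of_gt h1θ
  set L := Real.log (1/θ) with hLdef
  have hLpos : 0 < L := Real.log_pos (by rw [lt_div_iff₀ hθ0]; linarith)
  have hP : 0 < δRT0 + θ * δSP0 := by nlinarith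
  have hPne : δRT0 + θ * δSP0 ≠ 0 := ne_of_gt hP
  have hDpos : 0 < D := by rw [hD]; nlinarith
  have hDne : D ≠ 0 := ne_of_gt hDpos
  have hK : 0 < θ * (1 + θ⁻¹)^2 := by positivity
  have hKne : θ * (1 + θ⁻¹)^2 ≠ 0 := ne_of_gt hK
  have hβintpos : 0 < βint := by
    rw [hβint]; exact div_pos (mul_pos h1θ hLpos) hP
  have hβhpos : 0 < βh := lt_trans hβintpos hgap
  have hβhne : βh ≠ 0 := ne_of_gt hβhpos
  have hmbne : a * nbar + b ≠ 0 := by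
    intro h
    have h2 := hβhpos
    rw [hβh, h, inv_zero, zero_mul] at h2
    exact lt_irrefl 0 h2
  have hβid : βh * (a * nbar + b) = θ * (1 + θ⁻¹)^2 + a * (1 + θ) / D * L := by
    rw [hβh]
    field_simp
  have hnh' : nh = nbar - βh⁻¹ * (1 + θ) * L / D := by
    rw [hnh, hnbar]; ring
  have hkey : βh * (a * nh + b) = θ * (1 + θ⁻¹)^2 := by
    have e : βh * (a * nh + b) = βh * (a * nbar + b) - a * (1 + θ) / D * L := by
      rw [hnh']
      field_simp
      ring
    rw [e, hβid]; ring
  have h00 : J 0 0 = 0 := by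
    rw [hJ]
    simp only [Matrix.cons_val', Matrix.cons_val_zero, Matrix.empty_val',
      Matrix.cons_val_fin_one, Matrix.of_apply]
    rw [hkey, div_self hKne]; ring
  have h11 : J 1 1 = 0 := by
    rw [hJ]
    simp
  have h01 : J 0 1 = -(βh * D) / ((1 + θ) * (θ * (1 + θ⁻¹)^2)) := by
    have hac : a / (1 + θ) + c = -D / (1 + θ) := by
      rw [ha, hc, hD]; field_simp; ring
    rw [hJ]
    simp only [Matrix.cons_val', Matrix.cons_val_zero, Matrix.cons_val_one,
      Matrix.head_cons, Matrix.empty_val', Matrix.cons_val_fin_one, Matrix.of_apply]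
    rw [hac]
    field_simp
  have h10 : J 1 0 = ε * nh * (1 - nh) * (1 + θ) := by
    rw [hJ]
    simp
  have htr : J.trace = 0 := by
    rw [Matrix.trace_fin_two, h00, h11]; ring
  have hnh0 : 0 < nh := by
    rw [hnh]
    apply div_pos _ hDpos
    have hinv : βh⁻¹ < βint⁻¹ := inv_strictAnti₀ hβintpos hgap
    have hbi : βint⁻¹ * ((1 + θ) * L) = δRT0 + θ * δSP0 := by
      rw [hβint]; field_simp
    have h2 : βh⁻¹ * ((1 + θ) * L) < δRT0 + θ * δSP0 := by
      rw [← hbi]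
      exact mul_lt_mul_of_pos_right hinv (by positivity)
    linarith [h2, mul_assoc βh⁻¹ (1 + θ) L]
  have hnh1 : nh < 1 := by
    rw [hnh, div_lt_one hDpos, hD]
    have h2 : 0 < βh⁻¹ * (1 + θ) * L := by positivity
    have h3 : 0 < θ * δPS1 := mul_pos hθ0 hPS1
    linarith
  have hdetval : J.det = J 0 0 * J 1 1 - J 0 1 * J 1 0 := Matrix.det_fin_two J
  have hdetpos : 0 < J.det := by
    rw [hdetval, h00, h01, h10]
    have h2 : 0 < ε * nh * (1 - nh) * (1 + θ) :=
      mul_pos (mul_pos (mul_pos hε hnh0) (by linarith)) h1θ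
    have h3 : 0 < (βh * D) / ((1 + θ) * (θ * (1 + θ⁻¹)^2)) :=
      div_pos (mul_pos hβhpos hDpos) (mul_pos h1θ hK)
    have e : (0:ℝ) * J 1 1 - -(βh * D) / ((1 + θ) * (θ * (1 + θ⁻¹)^2)) *
        (ε * nh * (1 - nh) * (1 + θ)) =
        (βh * D) / ((1 + θ) * (θ * (1 + θ⁻¹)^2)) * (ε * nh * (1 - nh) * (1 + θ)) + 0 * J 1 1 := by
      ring
    rw [e, h11]
    simpa using mul_pos h3 h2
  have hdetω : J.det = ω ^ 2 := by rw [hω, Real.sq_sqrt hdetpos.le]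
  have hωpos : 0 < ω := by rw [hω]; exact Real.sqrt_pos.mpr hdetpos
  set Jc := J.map (algebraMap ℝ ℂ) with hJc
  have h00c : Jc 0 0 = 0 := by
    rw [hJc, Matrix.map_apply, h00, map_zero]
  have h11c : Jc 1 1 = 0 := by
    rw [hJc, Matrix.map_apply, h11, map_zero]
  have h0110 : Jc 0 1 * Jc 1 0 = -((ω:ℂ)^2) := by
    rw [hJc, Matrix.map_apply, Matrix.map_apply, ← map_mul]
    have : J 0 1 * J 1 0 = -(ω ^ 2) := by
      have := hdetω
      rw [hdetval, h00] at this
      linarith [this]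
    rw [this, map_neg, map_pow, Complex.coe_algebraMap]
  have hcp : Jc.charpoly = X ^ 2 + C ((ω:ℂ)^2) := by
    unfold Matrix.charpoly
    rw [Matrix.det_fin_two, Matrix.charmatrix_apply_eq, Matrix.charmatrix_apply_eq,
      Matrix.charmatrix_apply_ne _ _ _ (by decide), Matrix.charmatrix_apply_ne _ _ _ (by decide),
      h00c, h11c, neg_mul_neg, ← C_mul, h0110]
    simp only [map_zero, sub_zero, map_neg]
    ring
  refine ⟨htr, hdetpos, hdetω, hωpos, hcp, ?_⟩
  intro μ
  rw [hcp]
  simp only [IsRoot, eval_add, eval_pow, eval_X, eval_C]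
  constructor
  · intro h
    have hf : (μ - Complex.I * ω) * (μ + Complex.I * ω) = 0 := by
      linear_combination h - (ω:ℂ)^2 * Complex.I_sq
    rcases mul_eq_zero.mp hf with h' | h'
    · exact Or.inl (sub_eq_zero.mp h')
    · exact Or.inr (eq_neg_of_add_eq_zero_left h')
  · rintro (rfl | rfl) <;> linear_combination (ω:ℂ)^2 * Complex.I_sq
end
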